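/- arXiv:1211.0714 — 5 statements merged into one kernel-verified Lean document; each statement's English description precedes it below -/
import Mathlib

section
/- Let γ > 0 and let f : ℂ → ℂ be an entire function of exponential type satisfying |f(λ)| ≤ exp(A + γ(|Im λ| − Im λ)) for all λ ∈ ℂ, for some constant A ≥ 0, and |f(x)| ≥ 1 for all x ∈ ℝ. Then for every r > 0, the number N(r,f) of zeros of f of modulus at most r, counted with multiplicity, satisfies N(r,f) ≤ (1/log 2)·(4rγ/π + A). -/
open MeasureTheory Complex Real

/-- The order of vanishing of `f` at `z` (as a natural number); `0` if `f` is not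
analytic at `z` or vanishes to infinite order. -/
noncomputable def ordAt (f : ℂ → ℂ) (z : ℂ) : ℕ :=
  open Classical in
  if h : AnalyticAt ℂ f z then (analyticOrderAt f z).toNat else 0

/-- `N(r,f)`: the number of zeros of `f` of modulus at most `r`,
counted with multiplicity (as an extended nonnegative real). -/
noncomputable def zeroCount (f : ℂ → ℂ) (r : ℝ) : ENNReal :=
  ∑' z : ℂ, if ‖z‖ ≤ r ∧ f z = 0 then (ordAt f z : ENNReal) else 0

section Aux
open Filter Topology Finset


lemma abs_sin_periodic_pi : Function.Periodic (fun x : ℝ => |Real.sin x|) π := by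
  intro x
  simp only [Real.sin_add_pi, abs_neg]

lemma intInt_abs_sin (u v : ℝ) : IntervalIntegrable (fun t : ℝ => |Real.sin t|)
    MeasureTheory.volume u v :=
  (continuous_abs.comp Real.continuous_sin).intervalIntegrable _ _

lemma integral_abs_sin_period (θ : ℝ) : ∫ t in θ..(θ + π), |Real.sin t| = 2 := by
  rw [abs_sin_periodic_pi.intervalIntegral_add_eq θ 0]
  simp only [zero_add]
  rw [intervalIntegral.integral_congr (g := Real.sin)]
  · rw [integral_sin]; norm_num
  · intro x hx
    rw [Set.uIcc_of_le Real.pi_nonneg] at hx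
    exact abs_of_nonneg (Real.sin_nonneg_of_nonneg_of_le_pi hx.1 hx.2)

lemma sin_abs_lip (x y : ℝ) : |Real.sin x| - |Real.sin y| ≤ |x - y| := by
  calc |Real.sin x| - |Real.sin y| ≤ |Real.sin x - Real.sin y| := abs_sub_abs_le_abs_sub _ _
    _ ≤ |x - y| := by
        rw [Real.sin_sub_sin]
        rw [abs_mul, abs_mul]
        have h1 : |Real.sin ((x - y)/2)| ≤ |(x-y)/2| := Real.abs_sin_le_abs
        have h2 : |Real.cos ((x + y)/2)| ≤ 1 := Real.abs_cos_le_one _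
        have h3 : |(x-y)/2| = |x-y|/2 := by rw [abs_div]; norm_num
        have h0 : (0:ℝ) ≤ |Real.sin ((x - y)/2)| := abs_nonneg _
        calc |(2:ℝ)| * |Real.sin ((x - y)/2)| * |Real.cos ((x + y)/2)|
            ≤ |(2:ℝ)| * |Real.sin ((x - y)/2)| * 1 := by
              apply mul_le_mul_of_nonneg_left h2; positivity
          _ = 2 * |Real.sin ((x - y)/2)| := by norm_num
          _ ≤ 2 * (|x-y|/2) := by rw [h3] at h1; linarith
          _ = |x - y| := by ring

lemma sum_abs_sin_le (n : ℕ) (hn : 1 ≤ n) (θ : ℝ) :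
    ∑ k ∈ Finset.range n, |Real.sin (θ + 2 * π * k / n)| ≤ 2 * n / π + 2 * π := by
  have hπ := Real.pi_pos
  have hn' : (0:ℝ) < n := by exact_mod_cast hn
  set δ : ℝ := 2 * π / n with hδdef
  have hδ : 0 < δ := by positivity
  set a : ℕ → ℝ := fun k => θ + k * δ with ha
  have hstep : ∀ k : ℕ, δ * |Real.sin (a k)| ≤ (∫ t in (a k)..(a (k+1)), |Real.sin t|) + δ^2 := by
    intro k
    have hdiff : a (k+1) - a k = δ := by simp only [ha]; push_cast; ring
    have hle : a k ≤ a (k+1) := by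
      have : 0 ≤ a (k+1) - a k := by rw [hdiff]; linarith
      linarith
    have h1 : δ * |Real.sin (a k)| = ∫ t in (a k)..(a (k+1)), |Real.sin (a k)| := by
      rw [intervalIntegral.integral_const, smul_eq_mul, hdiff]
    rw [h1]
    have h2 : (∫ t in (a k)..(a (k+1)), |Real.sin t|) + δ^2
        = ∫ t in (a k)..(a (k+1)), (|Real.sin t| + δ) := by
      rw [intervalIntegral.integral_add (intInt_abs_sin _ _) intervalIntegrable_const,
        intervalIntegral.integral_const, smul_eq_mul, hdiff, sq]
    rw [h2]
    apply intervalIntegral.integral_mono_on hle intervalIntegrable_const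
      ((intInt_abs_sin _ _).add intervalIntegrable_const)
    intro t ht
    have h3 := sin_abs_lip (a k) t
    have h4 : |a k - t| ≤ δ := by
      rw [abs_of_nonpos (by linarith [ht.1])]
      have h5 := ht.2
      linarith
    linarith
  have hsum : δ * (∑ k ∈ Finset.range n, |Real.sin (a k)|)
      ≤ (∫ t in (a 0)..(a n), |Real.sin t|) + n * δ^2 := by
    rw [Finset.mul_sum]
    calc ∑ k ∈ Finset.range n, δ * |Real.sin (a k)|
        ≤ ∑ k ∈ Finset.range n, ((∫ t in (a k)..(a (k+1)), |Real.sin t|) + δ^2) :=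
          Finset.sum_le_sum fun k _ => hstep k
      _ = (∑ k ∈ Finset.range n, ∫ t in (a k)..(a (k+1)), |Real.sin t|) + n * δ^2 := by
          rw [Finset.sum_add_distrib]; simp [mul_comm]
      _ = (∫ t in (a 0)..(a n), |Real.sin t|) + n * δ^2 := by
          rw [intervalIntegral.sum_integral_adjacent_intervals]
          intro k _; exact intInt_abs_sin _ _
  have han : a n = θ + 2 * π := by
    simp only [ha, hδdef]; field_simp
  have ha0 : a 0 = θ := by simp [ha]
  have hint : (∫ t in (a 0)..(a n), |Real.sin t|) = 4 := by
    rw [ha0, han]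
    have hadj : (∫ t in θ..(θ+π), |Real.sin t|) + (∫ t in (θ+π)..(θ+2*π), |Real.sin t|)
        = ∫ t in θ..(θ+2*π), |Real.sin t| :=
      intervalIntegral.integral_add_adjacent_intervals (intInt_abs_sin _ _) (intInt_abs_sin _ _)
    have h2' : (θ + π) + π = θ + 2*π := by ring
    rw [← hadj, integral_abs_sin_period]
    have h6 := integral_abs_sin_period (θ + π)
    rw [h2'] at h6
    rw [h6]; norm_num
  rw [hint] at hsum
  have hkey : δ * (2 * n / π + 2 * π) = 4 + n * δ^2 := by
    simp only [hδdef]; field_simp; ring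
  have hmul : δ * (∑ k ∈ Finset.range n, |Real.sin (a k)|) ≤ δ * (2 * n / π + 2 * π) := by
    rw [hkey]; exact hsum
  have hfin := le_of_mul_le_mul_left hmul hδ
  calc ∑ k ∈ Finset.range n, |Real.sin (θ + 2 * π * k / n)|
      = ∑ k ∈ Finset.range n, |Real.sin (a k)| := by
        apply Finset.sum_congr rfl
        intro k _
        congr 1
        simp only [ha, hδdef]; ring
    _ ≤ 2 * n / π + 2 * π := hfin


/-- `f` vanishes to order at least `m` at `a` (punctured-neighborhood version). -/
def VOrd (f : ℂ → ℂ) (a : ℂ) (m : ℕ) : Prop :=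
  ∃ g : ℂ → ℂ, AnalyticAt ℂ g a ∧ ∀ᶠ z in 𝓝[≠] a, f z = (z - a) ^ m * g z

lemma vord_zero {f : ℂ → ℂ} (hf : AnalyticAt ℂ f a) : VOrd f a 0 :=
  ⟨f, hf, by filter_upwards with z; simp⟩

lemma VOrd.apply_eq_zero {f : ℂ → ℂ} {a : ℂ} {m : ℕ} (hf : Continuous f)
    (h : VOrd f a (m + 1)) : f a = 0 := by
  obtain ⟨g, hg, hev⟩ := h
  have h1 : Tendsto f (𝓝[≠] a) (𝓝 (f a)) :=
    (hf.continuousAt).continuousWithinAt.tendsto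
  have h2 : Tendsto (fun z => (z - a) ^ (m + 1) * g z) (𝓝[≠] a) (𝓝 (0 * g a)) := by
    apply Tendsto.mul
    · have : Tendsto (fun z : ℂ => (z - a) ^ (m + 1)) (𝓝 a) (𝓝 ((a - a) ^ (m + 1))) := by
        exact (continuous_id.sub continuous_const).pow _ |>.continuousAt
      rw [sub_self, zero_pow (Nat.succ_ne_zero m)] at this
      exact this.mono_left nhdsWithin_le_nhds
    · exact hg.continuousAt.continuousWithinAt.tendsto
  rw [zero_mul] at h2
  exact tendsto_nhds_unique (h1.congr' hev) h2

lemma VOrd.dslope_same {f : ℂ → ℂ} {a : ℂ} {m : ℕ} (hf : Continuous f)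
    (h : VOrd f a (m + 1)) : VOrd (dslope f a) a m := by
  obtain ⟨g, hg, hev⟩ := h
  have hfa : f a = 0 := VOrd.apply_eq_zero hf ⟨g, hg, hev⟩
  refine ⟨g, hg, ?_⟩
  filter_upwards [hev, self_mem_nhdsWithin] with z hz hza
  rw [dslope_of_ne f hza, slope_def_field, hfa, sub_zero, hz]
  have hzan : z - a ≠ 0 := sub_ne_zero.2 hza
  field_simp
  ring

lemma VOrd.dslope_ne {f : ℂ → ℂ} {a b : ℂ} {m : ℕ} (hab : b ≠ a) (hfa : f a = 0)
    (h : VOrd f b m) : VOrd (dslope f a) b m := by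
  obtain ⟨g, hg, hev⟩ := h
  refine ⟨fun z => (z - a)⁻¹ * g z, ?_, ?_⟩
  · exact (((analyticAt_id).sub analyticAt_const).inv (sub_ne_zero.2 hab)).mul hg
  · have hne : ∀ᶠ z in 𝓝[≠] b, z ≠ a :=
      eventually_nhdsWithin_of_eventually_nhds (eventually_ne_nhds hab)
    filter_upwards [hev, hne] with z hz hza
    rw [dslope_of_ne f hza, slope_def_field, hfa, sub_zero, hz]
    field_simp

lemma Differentiable.dslope_entire {f : ℂ → ℂ} (hf : Differentiable ℂ f) (a : ℂ) :
    Differentiable ℂ (dslope f a) := by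
  intro b
  rcases eq_or_ne b a with rfl | hb
  · obtain ⟨p, hp⟩ := hf.analyticAt b
    exact (hp.has_fpower_series_dslope_fslope).analyticAt.differentiableAt
  · exact (differentiableAt_dslope_of_ne hb).mpr (hf b)

lemma dslope_factor {f : ℂ → ℂ} (hfa : f a = 0) (z : ℂ) :
    f z = (z - a) * dslope f a z := by
  have := sub_smul_dslope f a z
  rw [smul_eq_mul, hfa, sub_zero] at this
  exact this.symm

/-- Global factorization: divide out a multiset of zeros with multiplicity. -/
lemma factor_multiset (M : Multiset ℂ) :
    ∀ f : ℂ → ℂ, Differentiable ℂ f → (∀ b : ℂ, VOrd f b (M.count b)) →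
    ∃ F : ℂ → ℂ, Differentiable ℂ F ∧ ∀ z, f z = F z * (M.map fun a => z - a).prod := by
  induction M using Multiset.induction_on with
  | empty =>
      intro f hf _
      exact ⟨f, hf, fun z => by simp⟩
  | cons a M ih =>
      intro f hf hV
      have hVa : VOrd f a (M.count a + 1) := by
        have := hV a
        rwa [Multiset.count_cons_self] at this
      have hfa : f a = 0 := hVa.apply_eq_zero hf.continuous
      have hd : Differentiable ℂ (dslope f a) := hf.dslope_entire a
      have hVd : ∀ b : ℂ, VOrd (dslope f a) b (M.count b) := by
        intro b
        rcases eq_or_ne b a with rfl | hb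
        · exact hVa.dslope_same hf.continuous
        · have := hV b
          rw [Multiset.count_cons_of_ne hb] at this
          exact this.dslope_ne hb hfa
      obtain ⟨F, hF, hfac⟩ := ih (dslope f a) hd hVd
      refine ⟨F, hF, fun z => ?_⟩
      rw [dslope_factor hfa z, hfac z, Multiset.map_cons, Multiset.prod_cons]
      ring

lemma not_eventually_zero {f : ℂ → ℂ} (hf : Differentiable ℂ f) (h0 : f 0 ≠ 0) (z : ℂ) :
    ¬ (∀ᶠ w in 𝓝 z, f w = 0) := by
  intro h
  have hA : AnalyticOnNhd ℂ f Set.univ := fun w _ => hf.analyticAt w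
  have := hA.eqOn_zero_of_preconnected_of_eventuallyEq_zero isPreconnected_univ
    (Set.mem_univ z) (by filter_upwards [h] with w hw; exact hw)
  exact h0 (this (Set.mem_univ 0))

lemma zero_set_finite {f : ℂ → ℂ} (hf : Differentiable ℂ f) (h0 : f 0 ≠ 0) (r : ℝ) :
    {z : ℂ | ‖z‖ ≤ r ∧ f z = 0}.Finite := by
  set S := {z : ℂ | ‖z‖ ≤ r ∧ f z = 0} with hS
  have hK : IsCompact (Metric.closedBall (0:ℂ) r) := isCompact_closedBall _ _
  have hU : ∀ z ∈ Metric.closedBall (0:ℂ) r, {w : ℂ | w ≠ z → f w ≠ 0} ∈ 𝓝 z := by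
    intro z _
    rcases (hf.analyticAt z).eventually_eq_zero_or_eventually_ne_zero with h | h
    · exact absurd h (not_eventually_zero hf h0 z)
    · rw [eventually_nhdsWithin_iff] at h
      filter_upwards [h] with w hw hwz
      exact hw hwz
  obtain ⟨t, _, ht⟩ := hK.elim_nhds_subcover _ hU
  apply Set.Finite.subset t.finite_toSet
  intro z hz
  have hzK : z ∈ Metric.closedBall (0:ℂ) r := by
    rw [Metric.mem_closedBall, dist_zero_right]
    exact hz.1
  obtain ⟨x, hxt, hx⟩ := Set.mem_iUnion₂.mp (ht hzK)
  rcases eq_or_ne z x with rfl | hne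
  · exact hxt
  · exact absurd hz.2 (hx hne)

lemma ordAt_eq {f : ℂ → ℂ} {a : ℂ} (hf : AnalyticAt ℂ f a) : ordAt f a = (analyticOrderAt f a).toNat := by
  simp only [ordAt, dif_pos hf]

lemma vord_ordAt {f : ℂ → ℂ} {a : ℂ} (hf : Differentiable ℂ f) (h0 : f 0 ≠ 0) :
    VOrd f a (ordAt f a) := by
  have ha : AnalyticAt ℂ f a := hf.analyticAt a
  have htop : analyticOrderAt f a ≠ ⊤ := by
    intro h
    exact not_eventually_zero hf h0 a (analyticOrderAt_eq_top.mp h)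
  have : analyticOrderAt f a = ((analyticOrderAt f a).toNat : ℕ∞) := (ENat.coe_toNat htop).symm
  obtain ⟨g, hg, hgne, hev⟩ := (ha.analyticOrderAt_eq_natCast).mp this
  rw [ordAt_eq ha]
  refine ⟨g, hg, ?_⟩
  have := eventually_nhdsWithin_of_eventually_nhds (s := {a}ᶜ) hev
  filter_upwards [this] with z hz
  rw [hz, smul_eq_mul]

lemma ordAt_pos {f : ℂ → ℂ} {a : ℂ} (hf : Differentiable ℂ f) (h0 : f 0 ≠ 0)
    (hfa : f a = 0) : 1 ≤ ordAt f a := by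
  have ha : AnalyticAt ℂ f a := hf.analyticAt a
  have htop : analyticOrderAt f a ≠ ⊤ := by
    intro h
    exact not_eventually_zero hf h0 a (analyticOrderAt_eq_top.mp h)
  rw [ordAt_eq ha]
  rcases Nat.eq_zero_or_pos (analyticOrderAt f a).toNat with h | h
  · exfalso
    have : analyticOrderAt f a = (0 : ℕ) := by
      rw [← h, ENat.coe_toNat htop]
    obtain ⟨g, hg, hgne, hev⟩ := (ha.analyticOrderAt_eq_natCast (n := 0)).mp this
    have := hev.self_of_nhds
    simp only [pow_zero, one_smul] at this
    exact hgne (this ▸ hfa)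
  · exact h

/-- The multiset of zeros of `f` in the closed disk of radius `r`, with multiplicity. -/
lemma exists_zero_multiset {f : ℂ → ℂ} (hf : Differentiable ℂ f) (h0 : f 0 ≠ 0)
    {r : ℝ} (hr : 0 < r) :
    ∃ M : Multiset ℂ,
      (∀ a ∈ M, ‖a‖ ≤ r ∧ a ≠ 0) ∧
      (∀ b : ℂ, VOrd f b (M.count b)) ∧
      zeroCount f r = (M.card : ENNReal) := by
  classical
  have hS := zero_set_finite hf h0 r
  set T := hS.toFinset with hT
  set M : Multiset ℂ := ∑ a ∈ T, Multiset.replicate (ordAt f a) a with hM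
  have hmemT : ∀ a, a ∈ T ↔ ‖a‖ ≤ r ∧ f a = 0 := by
    intro a; rw [hT, Set.Finite.mem_toFinset]; rfl
  have hmemM : ∀ a, a ∈ M → a ∈ T := by
    intro a haM
    rw [hM] at haM
    obtain ⟨i, hi, hmem⟩ := Multiset.mem_sum.mp haM
    rwa [Multiset.eq_of_mem_replicate hmem]
  have hcount : ∀ b, M.count b = if b ∈ T then ordAt f b else 0 := by
    intro b
    rw [hM, Multiset.count_sum']
    split_ifs with hb
    · rw [Finset.sum_eq_single b]
      · simp [Multiset.count_replicate]
      · intro c _ hcb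
        rw [Multiset.count_replicate, if_neg hcb]
      · intro hbT; exact absurd hb hbT
    · apply Finset.sum_eq_zero
      intro c hc
      rw [Multiset.count_replicate, if_neg]
      intro hbc
      exact hb (hbc ▸ hc)
  refine ⟨M, ?_, ?_, ?_⟩
  · intro a haM
    have := (hmemT a).mp (hmemM a haM)
    exact ⟨this.1, fun h => h0 (h ▸ this.2)⟩
  · intro b
    rw [hcount b]
    split_ifs with hb
    · exact vord_ordAt hf h0
    · exact vord_zero (hf.analyticAt b)
  · rw [zeroCount]
    rw [tsum_eq_sum (s := T) ?_]
    · have hcard : Multiset.card M = ∑ a ∈ T, ordAt f a := by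
        rw [hM]
        rw [Multiset.card_sum]
        apply Finset.sum_congr rfl
        intro a _
        simp [Multiset.card_replicate]
      rw [hcard]
      push_cast
      apply Finset.sum_congr rfl
      intro a ha
      rw [if_pos ((hmemT a).mp ha)]
    · intro b hb
      rw [if_neg]
      intro hcond
      exact hb ((hmemT b).mpr hcond)


section Helpers

lemma multiset_abs_prod (M : Multiset ℂ) :
    ‖M.prod‖ = (M.map (‖·‖)).prod := by
  induction M using Multiset.induction_on with
  | empty => simp
  | cons a M ih => simp [norm_mul, ih]

lemma diff_multiset_prod (M : Multiset ℂ) (φ : ℂ → ℂ → ℂ)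
    (h : ∀ a ∈ M, Differentiable ℂ (φ a)) :
    Differentiable ℂ (fun z => (M.map fun a => φ a z).prod) := by
  induction M using Multiset.induction_on with
  | empty => simpa using differentiable_const (1:ℂ)
  | cons a M ih =>
      simp only [Multiset.map_cons, Multiset.prod_cons]
      exact (h a (Multiset.mem_cons_self a M)).mul
        (ih fun b hb => h b (Multiset.mem_cons_of_mem hb))

lemma blaschke_abs {R : ℝ} (hR : 0 < R) {z : ℂ} (hz : ‖z‖ = R) (a : ℂ) :
    ‖(R : ℂ)^2 - (starRingEnd ℂ) a * z‖ = R * ‖z - a‖ := by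
  have h1 : ((R : ℂ))^2 = z * (starRingEnd ℂ) z := by
    rw [Complex.mul_conj, ← Complex.sq_norm, hz]
    norm_cast
  rw [h1]
  have h2 : z * (starRingEnd ℂ) z - (starRingEnd ℂ) a * z = z * (starRingEnd ℂ) (z - a) := by
    rw [map_sub]; ring
  rw [h2, norm_mul, hz, Complex.norm_conj]

lemma sum_omega_pow (n' : ℕ) (h2 : 2 ≤ n') :
    ∑ k ∈ Finset.range n', (Complex.exp (((2*π/(n':ℝ) : ℝ) : ℂ) * Complex.I))^k = 0 := by
  have hπ := Real.pi_pos
  have hn'0 : (0:ℝ) < (n':ℝ) := by exact_mod_cast Nat.lt_of_lt_of_le Nat.zero_lt_two h2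
  set ω : ℂ := Complex.exp (((2*π/(n':ℝ) : ℝ) : ℂ) * Complex.I) with hω
  have hω1 : ω ≠ 1 := by
    intro h
    rw [hω, Complex.exp_eq_one_iff] at h
    obtain ⟨m, hm⟩ := h
    have hI : ((2*π/(n':ℝ) : ℝ) : ℂ) = (m:ℂ) * (2*π) := by
      have := hm
      rw [show (m:ℂ) * (2*↑π*Complex.I) = ((m:ℂ) * (2*↑π)) * Complex.I by ring] at this
      exact mul_right_cancel₀ Complex.I_ne_zero this
    have hreal : 2*π/(n':ℝ) = (m:ℝ) * (2*π) := by exact_mod_cast hI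
    have h1n : 1/(n':ℝ) = (m:ℝ) := by
      field_simp at hreal
      field_simp
      nlinarith [hreal]
    have hlow : (0:ℝ) < 1/(n':ℝ) := by positivity
    have hhigh : 1/(n':ℝ) < 1 := by
      rw [div_lt_one hn'0]
      exact_mod_cast Nat.lt_of_lt_of_le Nat.one_lt_two h2
    rcases le_or_gt m 0 with hm0 | hm0
    · have : (m:ℝ) ≤ 0 := by exact_mod_cast hm0
      linarith
    · have : (1:ℝ) ≤ (m:ℝ) := by exact_mod_cast hm0
      linarith
  have hωn : ω ^ n' = 1 := by
    rw [hω, ← Complex.exp_nat_mul]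
    have harg : (n':ℂ) * (((2*π/(n':ℝ) : ℝ) : ℂ) * Complex.I) = 2*↑π*Complex.I := by
      have hne : (n':ℂ) ≠ 0 := by exact_mod_cast (ne_of_gt hn'0)
      push_cast
      field_simp
    rw [harg, Complex.exp_two_pi_mul_I]
  rw [geom_sum_eq hω1, hωn, sub_self, zero_div]

lemma multiset_prod_le_pow (M : Multiset ℝ) (r : ℝ) (h0 : 0 ≤ r)
    (h : ∀ x ∈ M, 0 ≤ x ∧ x ≤ r) : M.prod ≤ r ^ Multiset.card M := by
  induction M using Multiset.induction_on with
  | empty => simp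
  | cons a M ih =>
      rw [Multiset.prod_cons, Multiset.card_cons, pow_succ']
      have hprodnn : 0 ≤ M.prod := by
        apply Multiset.prod_nonneg
        intro x hx
        exact (h x (Multiset.mem_cons_of_mem hx)).1
      apply mul_le_mul (h a (Multiset.mem_cons_self a M)).2
        (ih fun x hx => h x (Multiset.mem_cons_of_mem hx)) hprodnn h0

end Helpers

lemma key_step
    (γ A r : ℝ) (hγ : 0 < γ) (hA : 0 ≤ A) (hr : 0 < r)
    (f F : ℂ → ℂ) (hF : Differentiable ℂ F)
    (hbound : ∀ z : ℂ, ‖f z‖ ≤ Real.exp (A + γ * (|z.im| - z.im)))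
    (hf0 : 1 ≤ ‖f 0‖)
    (M : Multiset ℂ) (hMmem : ∀ a ∈ M, ‖a‖ ≤ r ∧ a ≠ 0)
    (hfac : ∀ z, f z = F z * (M.map fun a => z - a).prod)
    (n' : ℕ) (h2 : 2 ≤ n')
    (htrig : ∀ θ : ℝ, ∑ k ∈ Finset.range n', |Real.sin (θ + 2 * π * k / n')| ≤ 2 * n' / π + 2 * π) :
    (Multiset.card M : ℝ) * Real.log 2 ≤ A + 4*r*γ/π + γ*(2*r)*(2*π)/n' := by
  classical
  have hπ := Real.pi_pos
  have hn'0 : (0:ℝ) < (n':ℝ) := by exact_mod_cast Nat.lt_of_lt_of_le Nat.zero_lt_two h2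
  set n : ℕ := Multiset.card M with hn
  set R : ℝ := 2 * r with hR
  have hR0 : 0 < R := by rw [hR]; linarith
  set ω : ℂ := Complex.exp (((2*π/(n':ℝ) : ℝ) : ℂ) * Complex.I) with hω
  have habsω : ‖ω‖ = 1 := Complex.norm_exp_ofReal_mul_I _
  set Q : ℂ → ℂ := fun z => (M.map fun a => (R : ℂ)^2 - (starRingEnd ℂ) a * z).prod with hQ
  set g : ℂ → ℂ := fun z => F z * Q z with hg
  set G : ℂ → ℂ := fun z => ∏ k ∈ Finset.range n', g (ω^k * z) with hG
  -- differentiability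
  have hQd : Differentiable ℂ Q := by
    apply diff_multiset_prod
    intro a _
    exact (differentiable_const _).sub ((differentiable_const _).mul differentiable_id)
  have hgd : Differentiable ℂ g := hF.mul hQd
  have hGd : Differentiable ℂ G := by
    apply Differentiable.fun_finsetProd
    intro k _
    exact hgd.comp ((differentiable_const _).mul differentiable_id)
  -- circle identity for g
  have hcirc : ∀ w : ℂ, ‖w‖ = R → ‖g w‖ = R^n * ‖f w‖ := by
    intro w hw
    have hQw : ‖Q w‖ = R^n * ‖(M.map fun a => w - a).prod‖ := by
      rw [hQ]
      simp only []
      rw [multiset_abs_prod, Multiset.map_map, multiset_abs_prod, Multiset.map_map]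
      have hcongr : (M.map ((‖·‖) ∘ fun a => (R : ℂ)^2 - (starRingEnd ℂ) a * w))
          = M.map (fun a => R * ‖w - a‖) :=
        Multiset.map_congr rfl (fun a _ => blaschke_abs hR0 hw a)
      rw [hcongr, Multiset.prod_map_mul, Multiset.map_const', Multiset.prod_replicate]
      simp [hn]
    rw [hg]
    simp only []
    rw [norm_mul, hQw, hfac w, norm_mul]
    ring
  -- lower bound for |g 0|
  have habsg0 : (4*r)^n ≤ ‖g 0‖ := by
    have hQ0 : ‖Q 0‖ = (R^2)^n := by
      rw [hQ]
      simp only []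
      have hc : (M.map fun a => (R : ℂ)^2 - (starRingEnd ℂ) a * 0) = M.map (fun _ => ((R:ℂ))^2) :=
        Multiset.map_congr rfl (by intro a _; simp)
      rw [hc, Multiset.map_const', Multiset.prod_replicate, norm_pow, norm_pow,
        Complex.norm_real, Real.norm_eq_abs, abs_of_pos hR0, hn]
    set P0 : ℝ := (M.map (‖·‖)).prod with hP0
    have hP0pos : 0 < P0 := by
      apply Multiset.prod_pos
      intro x hx
      obtain ⟨a, ha, rfl⟩ := Multiset.mem_map.mp hx
      exact norm_pos_iff.mpr (hMmem a ha).2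
    have hP0le : P0 ≤ r^n := by
      have h' := multiset_prod_le_pow (M.map (‖·‖)) r (le_of_lt hr) ?_
      · rwa [Multiset.card_map, ← hn] at h'
      · intro x hx
        obtain ⟨a, ha, rfl⟩ := Multiset.mem_map.mp hx
        exact ⟨norm_nonneg _, (hMmem a ha).1⟩
    have habsf0 : ‖f 0‖ = ‖F 0‖ * P0 := by
      rw [hfac 0, norm_mul, multiset_abs_prod, Multiset.map_map, hP0]
      congr 2
      apply Multiset.map_congr rfl
      intro a _
      simp [norm_sub_rev]
    have habsg0' : ‖g 0‖ = ‖F 0‖ * (R^2)^n := by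
      rw [hg]
      simp only []
      rw [norm_mul, hQ0]
    have h1 : 1 ≤ ‖F 0‖ * P0 := habsf0 ▸ hf0
    have h2' : (R^2)^n ≤ ‖g 0‖ * P0 := by
      rw [habsg0']
      calc (R^2)^n ≤ (‖F 0‖ * P0) * (R^2)^n := by
            apply le_mul_of_one_le_left (by positivity) h1
        _ = ‖F 0‖ * (R^2)^n * P0 := by ring
    have h3 : (4*r)^n * P0 ≤ (R^2)^n := by
      calc (4*r)^n * P0 ≤ (4*r)^n * r^n := by
            apply mul_le_mul_of_nonneg_left hP0le (by positivity)
        _ = (4*r*r)^n := by rw [← mul_pow]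
        _ = (R^2)^n := by rw [hR]; ring_nf
    have := le_trans h3 h2'
    exact le_of_mul_le_mul_right this hP0pos
  -- the maximum-modulus bound
  set E : ℝ := n'*A + γ*R*(2*(n':ℝ)/π + 2*π) with hE
  set C : ℝ := R^(n*n') * Real.exp E with hC
  have hfront : ∀ z ∈ frontier (Metric.ball (0:ℂ) R), ‖G z‖ ≤ C := by
    intro z hz
    rw [frontier_ball (0:ℂ) (ne_of_gt hR0)] at hz
    have hzabs : ‖z‖ = R := by
      rw [mem_sphere_iff_norm, sub_zero] at hz
      rw [hz]
    have hwk : ∀ k : ℕ, ‖ω^k * z‖ = R := by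
      intro k
      rw [norm_mul, norm_pow, habsω, one_pow, one_mul, hzabs]
    rw [hG]
    simp only []
    rw [norm_prod]
    -- sum of imaginary parts vanishes
    have hsum0 : ∑ k ∈ Finset.range n', (ω^k * z).im = 0 := by
      rw [← Complex.im_sum, ← Finset.sum_mul, sum_omega_pow n' h2, zero_mul, Complex.zero_im]
    -- bound on sum of |Im|
    have hsumabs : ∑ k ∈ Finset.range n', |(ω^k * z).im| ≤ R * (2*(n':ℝ)/π + 2*π) := by
      set θ : ℝ := Complex.arg z with hθ
      have hzeq : z = (R:ℂ) * Complex.exp ((θ:ℂ) * Complex.I) := by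
        conv_lhs => rw [← Complex.norm_mul_exp_arg_mul_I z]
        rw [hzabs]
      have him : ∀ k : ℕ, (ω^k * z).im = R * Real.sin (θ + 2*π*k/n') := by
        intro k
        rw [hω, ← Complex.exp_nat_mul, hzeq]
        have harg : Complex.exp ((k:ℂ) * (((2*π/(n':ℝ) : ℝ) : ℂ) * Complex.I))
              * ((R:ℂ) * Complex.exp ((θ:ℂ) * Complex.I))
            = (R:ℂ) * Complex.exp (((θ + 2*π*k/n' : ℝ) : ℂ) * Complex.I) := by
          rw [mul_left_comm, ← Complex.exp_add]
          congr 2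
          push_cast
          ring
        rw [harg, Complex.mul_im]
        simp only [Complex.ofReal_re, Complex.ofReal_im, Complex.exp_ofReal_mul_I_im,
          Complex.exp_ofReal_mul_I_re, zero_mul, add_zero]
      calc ∑ k ∈ Finset.range n', |(ω^k * z).im|
          = ∑ k ∈ Finset.range n', R * |Real.sin (θ + 2*π*k/n')| := by
            apply Finset.sum_congr rfl
            intro k _
            rw [him k, abs_mul, abs_of_pos hR0]
        _ = R * ∑ k ∈ Finset.range n', |Real.sin (θ + 2*π*k/n')| := by
            rw [Finset.mul_sum]
        _ ≤ R * (2*(n':ℝ)/π + 2*π) := by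
            apply mul_le_mul_of_nonneg_left (htrig θ) (le_of_lt hR0)
    calc ∏ k ∈ Finset.range n', ‖g (ω^k * z)‖
        = ∏ k ∈ Finset.range n', (R^n * ‖f (ω^k * z)‖) := by
          exact Finset.prod_congr rfl (fun k _ => hcirc _ (hwk k))
      _ = (R^n)^n' * ∏ k ∈ Finset.range n', ‖f (ω^k * z)‖ := by
          rw [Finset.prod_mul_distrib, Finset.prod_const, Finset.card_range]
      _ ≤ (R^n)^n' * ∏ k ∈ Finset.range n',
            Real.exp (A + γ * (|(ω^k * z).im| - (ω^k * z).im)) := by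
          apply mul_le_mul_of_nonneg_left _ (by positivity)
          apply Finset.prod_le_prod
          · intro k _; exact norm_nonneg _
          · intro k _; exact hbound _
      _ = (R^n)^n' * Real.exp (∑ k ∈ Finset.range n',
            (A + γ * (|(ω^k * z).im| - (ω^k * z).im))) := by
          rw [Real.exp_sum]
      _ ≤ C := by
          rw [hC, ← pow_mul]
          apply mul_le_mul_of_nonneg_left _ (by positivity)
          rw [Real.exp_le_exp]
          have hsplit : ∑ k ∈ Finset.range n', (A + γ * (|(ω^k * z).im| - (ω^k * z).im))
              = n'*A + γ * ((∑ k ∈ Finset.range n', |(ω^k * z).im|)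
                - ∑ k ∈ Finset.range n', (ω^k * z).im) := by
            rw [Finset.sum_add_distrib, Finset.sum_const, Finset.card_range, nsmul_eq_mul,
              ← Finset.mul_sum, Finset.sum_sub_distrib]
          rw [hsplit, hsum0, sub_zero, hE]
          have := mul_le_mul_of_nonneg_left hsumabs (le_of_lt hγ)
          nlinarith [this]
  have hG0 : ‖G 0‖ ≤ C := by
    apply Complex.norm_le_of_forall_mem_frontier_norm_le Metric.isBounded_ball
      hGd.diffContOnCl hfront
    exact subset_closure (Metric.mem_ball_self hR0)
  -- combine
  have hGzero : G 0 = (g 0)^n' := by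
    rw [hG]
    simp only [mul_zero]
    rw [Finset.prod_const, Finset.card_range]
  have hchain : ((4*r)^n)^n' ≤ C := by
    calc ((4*r)^n)^n' ≤ (‖g 0‖)^n' := by
          apply pow_le_pow_left₀ (by positivity) habsg0
      _ = ‖G 0‖ := by rw [hGzero, norm_pow]
      _ ≤ C := hG0
  -- extract the log inequality
  have hpow4 : ((4*r):ℝ)^(n*n') = 2^(n*n') * R^(n*n') := by
    rw [hR, show (4*r) = 2*(2*r) by ring, mul_pow]
  have h2nn : (2:ℝ)^(n*n') ≤ Real.exp E := by
    have hc : ((4*r):ℝ)^(n*n') ≤ R^(n*n') * Real.exp E := by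
      rw [← pow_mul] at hchain
      rw [hC] at hchain
      exact hchain
    rw [hpow4] at hc
    have hRpos : (0:ℝ) < R^(n*n') := by positivity
    nlinarith [hc, hRpos, Real.exp_pos E]
  have hlog : ((n*n' : ℕ):ℝ) * Real.log 2 ≤ E := by
    have h' := Real.log_le_log (by positivity) h2nn
    rw [Real.log_pow, Real.log_exp] at h'
    push_cast
    exact_mod_cast h'
  -- divide by n'
  have hEeq : E = (A + 4*r*γ/π + γ*R*(2*π)/n') * n' := by
    rw [hE, hR]
    field_simp
    ring
  rw [hEeq] at hlog
  have hfin : ((n:ℝ) * Real.log 2) * n' ≤ (A + 4*r*γ/π + γ*R*(2*π)/n') * n' := by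
    calc ((n:ℝ) * Real.log 2) * n' = ((n*n' : ℕ):ℝ) * Real.log 2 := by push_cast; ring
      _ ≤ _ := hlog
  exact le_of_mul_le_mul_right hfin hn'0

end Aux

/-- Global bound on the zero-counting function of an entire function in the class `E_γ`. -/
theorem zeroCount_bound (γ A : ℝ) (hγ : 0 < γ) (hA : 0 ≤ A)
    (f : ℂ → ℂ) (hf : Differentiable ℂ f)
    (hbound : ∀ z : ℂ, ‖f z‖ ≤ Real.exp (A + γ * (|z.im| - z.im)))
    (hreal : ∀ x : ℝ, 1 ≤ ‖f x‖)
    (r : ℝ) (hr : 0 < r) :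
    zeroCount f r ≤ ENNReal.ofReal ((1 / Real.log 2) * (4 * r * γ / π + A)) := by
  have hπ := Real.pi_pos
  have hlog2 : (0:ℝ) < Real.log 2 := Real.log_pos one_lt_two
  have hf01 : 1 ≤ ‖f 0‖ := by
    have := hreal 0
    rwa [Complex.ofReal_zero] at this
  have h0 : f 0 ≠ 0 := by
    intro h
    rw [h, norm_zero] at hf01
    linarith
  obtain ⟨M, hMmem, hMvord, hMcount⟩ := exists_zero_multiset hf h0 hr
  obtain ⟨F, hFd, hfac⟩ := factor_multiset M f hf hMvord
  set n : ℕ := Multiset.card M with hn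
  have hmain : (n:ℝ) * Real.log 2 ≤ A + 4*r*γ/π := by
    by_contra hcon
    push_neg at hcon
    set ε : ℝ := (n:ℝ)*Real.log 2 - (A + 4*r*γ/π) with hε
    have hε0 : 0 < ε := by rw [hε]; linarith
    obtain ⟨n', hn'⟩ := exists_nat_gt (max 2 (γ*(2*r)*(2*π)/ε))
    have h2n' : 2 ≤ n' := by
      have h2 : (2:ℝ) < n' := lt_of_le_of_lt (le_max_left _ _) hn'
      exact_mod_cast le_of_lt h2
    have hn'0 : (0:ℝ) < n' := by
      have : (0:ℕ) < n' := lt_of_lt_of_le Nat.zero_lt_two h2n'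
      exact_mod_cast this
    have hkey := key_step γ A r hγ hA hr f F hFd hbound hf01 M hMmem hfac n' h2n'
      (fun θ => sum_abs_sin_le n' (le_trans one_le_two h2n') θ)
    have hlt : γ*(2*r)*(2*π)/n' < ε := by
      rw [div_lt_iff₀ hn'0]
      have hq : γ*(2*r)*(2*π)/ε < n' := lt_of_le_of_lt (le_max_right _ _) hn'
      rw [div_lt_iff₀ hε0] at hq
      nlinarith [hq]
    rw [← hn] at hkey
    linarith
  rw [hMcount]
  have hfin : ((n:ℕ):ℝ) ≤ 1 / Real.log 2 * (4*r*γ/π + A) := by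
    rw [div_mul_eq_mul_div, one_mul, le_div_iff₀ hlog2]
    linarith
  calc ((Multiset.card M : ℕ) : ENNReal) = ENNReal.ofReal ((n:ℕ):ℝ) := by
        rw [ENNReal.ofReal_natCast, hn]
    _ ≤ ENNReal.ofReal (1 / Real.log 2 * (4*r*γ/π + A)) := ENNReal.ofReal_le_ofReal hfin
end

section
/- Let γ > 0 and let q ∈ L¹(ℝ;ℂ) with supp q ⊆ [0,γ]. Then the series a(λ) = 1 + Σ_{n≥1} a_n(λ) converges uniformly on bounded subsets of ℂ and defines an entire function a : ℂ → ℂ. -/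
open MeasureTheory Complex Real Filter

/-- The `n`-th simplex integral `a_n(λ)` in the iteration series for the inverse
transmission coefficient of the 1D massless Dirac operator with potential `q`. -/
noncomputable def aCoeff (γ : ℝ) (q : ℝ → ℂ) (n : ℕ) (l : ℂ) : ℂ :=
  ∫ t : Fin (2 * n) → ℝ in {t | StrictMono t ∧ ∀ i, t i ∈ Set.Ioo 0 γ},
    ∏ j : Fin n,
      q (t ⟨2 * (j : ℕ), by have := j.isLt; omega⟩) *
        (starRingEnd ℂ) (q (t ⟨2 * (j : ℕ) + 1, by have := j.isLt; omega⟩)) *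
        Complex.exp (2 * Complex.I * l *
          (((t ⟨2 * (j : ℕ) + 1, by have := j.isLt; omega⟩) : ℝ)
            - (t ⟨2 * (j : ℕ), by have := j.isLt; omega⟩)))



theorem pi_eval_null (m : ℕ) (i : Fin m) {N : Set ℝ} (hN : volume N = 0) :
    (volume : Measure (Fin m → ℝ)) {t | t i ∈ N} = 0 := by
  obtain ⟨N', hNN', hN'meas, hN'⟩ := exists_measurable_superset_of_null hN
  refine measure_mono_null (t := {t : Fin m → ℝ | t i ∈ N'}) (fun t ht => hNN' ht) ?_
  have h : {t : Fin m → ℝ | t i ∈ N'} = Set.pi Set.univ (Function.update (fun _ => Set.univ) i N') := by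
    ext t
    simp only [Set.mem_setOf_eq, Set.mem_pi, Set.mem_univ, forall_true_left]
    constructor
    · intro h j
      rcases eq_or_ne j i with rfl | hj
      · simpa using h
      · simp [Function.update_of_ne hj]
    · intro h; simpa using h i
  rw [h, volume_pi_pi]
  exact Finset.prod_eq_zero (Finset.mem_univ i) (by simp [hN'])

theorem ae_all_notMem (m : ℕ) {N : Set ℝ} (hN : volume N = 0) :
    ∀ᵐ t : Fin m → ℝ, ∀ i, t i ∉ N := by
  have h0 : (volume : Measure (Fin m → ℝ)) (⋃ i, {t | t i ∈ N}) = 0 :=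
    measure_iUnion_null fun i => pi_eval_null m i hN
  have := measure_mono_null (t := ⋃ i, {t : Fin m → ℝ | t i ∈ N})
    (s := {t : Fin m → ℝ | ¬ ∀ i, t i ∉ N}) ?_ h0
  · exact this
  · intro t ht
    simp only [Set.mem_setOf_eq, not_forall, not_not] at ht
    obtain ⟨i, hi⟩ := ht
    exact Set.mem_iUnion.2 ⟨i, hi⟩


theorem measurable_monoSet (m : ℕ) (γ : ℝ) (σ : Equiv.Perm (Fin m)) :
    MeasurableSet {t : Fin m → ℝ | StrictMono (t ∘ σ) ∧ ∀ i, t i ∈ Set.Ioo 0 γ} := by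
  have h : {t : Fin m → ℝ | StrictMono (t ∘ σ) ∧ ∀ i, t i ∈ Set.Ioo 0 γ}
      = (⋂ (i : Fin m) (j : Fin m) (_ : i < j), {t : Fin m → ℝ | t (σ i) < t (σ j)})
        ∩ ⋂ i : Fin m, (fun t : Fin m → ℝ => t i) ⁻¹' (Set.Ioo 0 γ) := by
    ext t
    simp only [Set.mem_setOf_eq, Set.mem_inter_iff, Set.mem_iInter, Set.mem_preimage]
    exact and_congr (by rfl) (by rfl)
  rw [h]
  refine MeasurableSet.inter ?_ ?_
  · exact MeasurableSet.iInter fun i => MeasurableSet.iInter fun j => MeasurableSet.iInter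
      fun _ => measurableSet_lt (measurable_pi_apply _) (measurable_pi_apply _)
  · exact MeasurableSet.iInter fun i => (measurable_pi_apply i) measurableSet_Ioo

theorem simplex_integral_le (m : ℕ) (γ : ℝ) {g : ℝ → ℝ}
    (hgi : Integrable g) (hg0 : ∀ x, 0 ≤ g x) :
    ∫ t in {t : Fin m → ℝ | StrictMono t ∧ ∀ i, t i ∈ Set.Ioo 0 γ}, ∏ i, g (t i)
      ≤ (∫ x, g x) ^ m / (Nat.factorial m) := by
  classical
  set G : (Fin m → ℝ) → ℝ := fun t => ∏ i, g (t i) with hG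
  set S : Equiv.Perm (Fin m) → Set (Fin m → ℝ) :=
    fun σ => {t | StrictMono (t ∘ σ) ∧ ∀ i, t i ∈ Set.Ioo 0 γ} with hS
  have hS1 : {t : Fin m → ℝ | StrictMono t ∧ ∀ i, t i ∈ Set.Ioo 0 γ} = S 1 := by
    simp [hS]
  have hmeas : ∀ σ, MeasurableSet (S σ) := fun σ => measurable_monoSet m γ σ
  have hGint : Integrable G := Integrable.fintype_prod (f := fun _ => g) (fun _ => hgi)
  have hG0 : ∀ t, 0 ≤ G t := fun t => Finset.prod_nonneg fun i _ => hg0 _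
  have hint_eq : ∀ σ : Equiv.Perm (Fin m), ∫ t in S σ, G t = ∫ t in S 1, G t := by
    intro σ
    set e := MeasurableEquiv.piCongrLeft (fun _ : Fin m => ℝ) σ.symm with he
    have hmp : MeasurePreserving e volume volume :=
      volume_measurePreserving_piCongrLeft (fun _ => ℝ) σ.symm
    have happ : ∀ (t : Fin m → ℝ) (j : Fin m), e t j = t (σ j) := by
      intro t j
      simp [he, MeasurableEquiv.coe_piCongrLeft, Equiv.piCongrLeft_apply, eq_rec_constant]
    have hpre : e ⁻¹' (S 1) = S σ := by
      ext t
      simp only [hS, Set.mem_preimage, Set.mem_setOf_eq, Equiv.Perm.coe_one, Function.comp_id]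
      constructor
      · rintro ⟨h1, h2⟩
        refine ⟨?_, ?_⟩
        · intro a b hab
          have := h1 hab
          simpa [happ] using this
        · intro i
          have := h2 (σ.symm i)
          simpa [happ] using this
      · rintro ⟨h1, h2⟩
        refine ⟨?_, ?_⟩
        · intro a b hab
          have := h1 hab
          simpa [happ] using this
        · intro i
          simpa [happ] using h2 (σ i)
    have key := hmp.setIntegral_preimage_emb e.measurableEmbedding G (S 1)
    rw [hpre] at key
    rw [← key]
    refine setIntegral_congr_fun (hmeas σ) ?_
    intro t _
    simp only [hG, Function.comp]
    calc (∏ i, g (t i)) = ∏ i, g (t (σ i)) := (Equiv.prod_comp σ (fun i => g (t i))).symm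
      _ = ∏ i, g (e t i) := by simp [happ]
  have hdisj : ((Finset.univ : Finset (Equiv.Perm (Fin m))) : Set (Equiv.Perm (Fin m))).Pairwise
      (Function.onFun Disjoint S) := by
    intro σ _ τ _ hne
    rw [Function.onFun, Set.disjoint_left]
    rintro t ⟨h1, _⟩ ⟨h2, _⟩
    apply hne
    have hinj : Function.Injective t := by
      intro a b hab
      have : (t ∘ σ) (σ.symm a) = (t ∘ σ) (σ.symm b) := by
        simp [Function.comp, hab]
      have := h1.injective this
      simpa using congrArg σ this
    have hrange : Set.range (t ∘ σ) = Set.range (t ∘ τ) := by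
      rw [Set.range_comp, Set.range_comp, Equiv.range_eq_univ, Equiv.range_eq_univ]
    haveI : WellFoundedLT (Fin m) := Finite.to_wellFoundedLT
    have hfun : t ∘ σ = t ∘ τ := (StrictMono.range_inj h1 h2).mp hrange
    exact Equiv.ext fun i => hinj (congrFun hfun i)
  have hsum : (Nat.factorial m : ℝ) * ∫ t in S 1, G t ≤ (∫ x, g x) ^ m := by
    have h1 : ∑ σ : Equiv.Perm (Fin m), ∫ t in S σ, G t
        = (Nat.factorial m : ℝ) * ∫ t in S 1, G t := by
      rw [Finset.sum_congr rfl (fun σ _ => hint_eq σ), Finset.sum_const, Finset.card_univ,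
        Fintype.card_perm, Fintype.card_fin, nsmul_eq_mul]
    have h2 : ∑ σ : Equiv.Perm (Fin m), ∫ t in S σ, G t
        = ∫ t in ⋃ σ ∈ (Finset.univ : Finset (Equiv.Perm (Fin m))), S σ, G t := by
      rw [integral_biUnion_finset _ (fun σ _ => hmeas σ) hdisj
        (fun σ _ => hGint.integrableOn)]
    have h3 : ∫ t in ⋃ σ ∈ (Finset.univ : Finset (Equiv.Perm (Fin m))), S σ, G t
        ≤ ∫ t, G t := setIntegral_le_integral hGint (Filter.Eventually.of_forall hG0)
    have h4 : ∫ t, G t = (∫ x, g x) ^ m := by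
      rw [hG]
      rw [integral_fintype_prod_volume_eq_pow (ι := Fin m) g, Fintype.card_fin]
    rw [← h1, ← h4]
    rw [h2]
    exact h3
  rw [hS1, le_div_iff₀ (by positivity : (0:ℝ) < (Nat.factorial m : ℝ))]
  linarith [hsum]


noncomputable def diracH (q : ℝ → ℂ) (n : ℕ) (t : Fin (2*n) → ℝ) : ℂ :=
  ∏ j : Fin n, q (t ⟨2*(j:ℕ), by have := j.isLt; omega⟩) *
    (starRingEnd ℂ) (q (t ⟨2*(j:ℕ)+1, by have := j.isLt; omega⟩))

noncomputable def diracD (n : ℕ) (t : Fin (2*n) → ℝ) : ℝ :=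
  ∑ j : Fin n, ((t ⟨2*(j:ℕ)+1, by have := j.isLt; omega⟩) - t ⟨2*(j:ℕ), by have := j.isLt; omega⟩)

theorem prod_range_pair {M : Type*} [CommMonoid M] (n : ℕ) (f : ℕ → M) :
    ∏ k ∈ Finset.range (2*n), f k = ∏ j ∈ Finset.range n, (f (2*j) * f (2*j+1)) := by
  induction n with
  | zero => simp
  | succ n ih =>
    rw [Finset.prod_range_succ, ← ih, show 2*(n+1) = (2*n+1)+1 by ring,
      Finset.prod_range_succ, Finset.prod_range_succ]
    ring_nf
    rw [mul_assoc]

theorem prod_pair {M : Type*} [CommMonoid M] (n : ℕ) (F : Fin (2*n) → M) :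
    ∏ j : Fin n, (F ⟨2*(j:ℕ), by have := j.isLt; omega⟩
      * F ⟨2*(j:ℕ)+1, by have := j.isLt; omega⟩) = ∏ i, F i := by
  classical
  set f : ℕ → M := fun k => if h : k < 2*n then F ⟨k, h⟩ else 1 with hf
  have hfv : ∀ k (h : k < 2*n), f k = F ⟨k, h⟩ := fun k h => dif_pos h
  have h1 : ∏ j : Fin n, (F ⟨2*(j:ℕ), by have := j.isLt; omega⟩
      * F ⟨2*(j:ℕ)+1, by have := j.isLt; omega⟩)
      = ∏ j : Fin n, (f (2*(j:ℕ)) * f (2*(j:ℕ)+1)) := by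
    refine Finset.prod_congr rfl fun j _ => ?_
    have hj := j.isLt
    rw [hfv (2*(j:ℕ)) (by omega), hfv (2*(j:ℕ)+1) (by omega)]
  have h2 : ∏ i : Fin (2*n), F i = ∏ i : Fin (2*n), f (i : ℕ) := by
    refine Finset.prod_congr rfl fun i _ => ?_
    rw [hfv (i:ℕ) i.isLt]
  rw [h1, h2, Fin.prod_univ_eq_prod_range (fun k => f (2*k) * f (2*k+1)) n,
    Fin.prod_univ_eq_prod_range f (2*n), prod_range_pair]

theorem norm_diracH (q : ℝ → ℂ) (n : ℕ) (t : Fin (2*n) → ℝ) :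
    ‖diracH q n t‖ = ∏ i : Fin (2*n), ‖q (t i)‖ := by
  rw [diracH, norm_prod, ← prod_pair n (fun i => ‖q (t i)‖)]
  exact Finset.prod_congr rfl fun j _ => by rw [norm_mul, RCLike.norm_conj]

theorem diracD_nonneg {n : ℕ} {t : Fin (2*n) → ℝ} (ht : StrictMono t) :
    0 ≤ diracD n t := by
  rw [diracD]
  refine Finset.sum_nonneg fun j _ => ?_
  have hj := j.isLt
  have := ht (show (⟨2*(j:ℕ), by omega⟩ : Fin (2*n)) < ⟨2*(j:ℕ)+1, by omega⟩ by
    exact Fin.mk_lt_mk.mpr (by omega))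
  linarith

theorem diracD_le {n : ℕ} {γ : ℝ} {t : Fin (2*n) → ℝ}
    (ht : ∀ i, t i ∈ Set.Ioo 0 γ) : diracD n t ≤ n * γ := by
  rw [diracD]
  have : ∀ j ∈ (Finset.univ : Finset (Fin n)),
      ((t ⟨2*(j:ℕ)+1, by have := j.isLt; omega⟩) - t ⟨2*(j:ℕ), by have := j.isLt; omega⟩) ≤ γ := by
    intro j _
    have h1 := ht ⟨2*(j:ℕ)+1, by have := j.isLt; omega⟩
    have h2 := ht ⟨2*(j:ℕ), by have := j.isLt; omega⟩
    have := h1.2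
    have := h2.1
    linarith
  calc _ ≤ ∑ _j : Fin n, γ := Finset.sum_le_sum this
    _ = n * γ := by rw [Finset.sum_const, Finset.card_univ, Fintype.card_fin, nsmul_eq_mul]

theorem norm_cexp_le {l : ℂ} {d B R : ℝ} (hd : |d| ≤ B) (hl : ‖l‖ ≤ R) (hB : 0 ≤ B) :
    ‖Complex.exp (2 * Complex.I * l * (d : ℂ))‖ ≤ Real.exp (2 * R * B) := by
  rw [Complex.norm_exp]
  apply Real.exp_le_exp.mpr
  calc (2 * Complex.I * l * (d : ℂ)).re ≤ ‖2 * Complex.I * l * (d : ℂ)‖ :=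
        Complex.re_le_norm _
    _ = 2 * ‖l‖ * |d| := by
        simp [Complex.norm_real]
    _ ≤ 2 * R * B := by
        have h1 : ‖l‖ ≤ R := hl
        have h2 : (0:ℝ) ≤ ‖l‖ := norm_nonneg _
        nlinarith [abs_nonneg d]

theorem dirac_integrand_eq (q : ℝ → ℂ) (n : ℕ) (l : ℂ) (t : Fin (2*n) → ℝ) :
    (∏ j : Fin n,
      q (t ⟨2 * (j : ℕ), by have := j.isLt; omega⟩) *
        (starRingEnd ℂ) (q (t ⟨2 * (j : ℕ) + 1, by have := j.isLt; omega⟩)) *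
        Complex.exp (2 * Complex.I * l *
          (((t ⟨2 * (j : ℕ) + 1, by have := j.isLt; omega⟩) : ℝ)
            - (t ⟨2 * (j : ℕ), by have := j.isLt; omega⟩))))
      = diracH q n t * Complex.exp (2 * Complex.I * l * (diracD n t : ℂ)) := by
  rw [Finset.prod_mul_distrib, diracH, diracD]
  congr 1
  rw [← Complex.exp_sum]
  congr 1
  rw [← Finset.mul_sum]
  congr 1
  push_cast
  rfl

theorem measurableSet_simplex (m : ℕ) (γ : ℝ) :
    MeasurableSet {t : Fin m → ℝ | StrictMono t ∧ ∀ i, t i ∈ Set.Ioo 0 γ} := by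
  have := measurable_monoSet m γ 1
  simpa using this

theorem aCoeff_norm_le (γ : ℝ) (hγ : 0 < γ) (q : ℝ → ℂ) (hq : Integrable q)
    (R : ℝ) (hR : 0 ≤ R) (n : ℕ) {l : ℂ} (hl : ‖l‖ ≤ R) :
    ‖aCoeff γ q n l‖
      ≤ Real.exp (2*R*γ*n) * (∫ x, ‖q x‖) ^ (2*n) / (Nat.factorial (2*n)) := by
  classical
  set q' := hq.1.mk q with hq'def
  have hae : q =ᵐ[volume] q' := hq.1.ae_eq_mk
  set g : ℝ → ℝ := fun x => ‖q' x‖ with hg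
  have hgi : Integrable g := (hq.congr hae).norm
  have hg0 : ∀ x, 0 ≤ g x := fun x => norm_nonneg _
  have hgint_eq : ∫ x, g x = ∫ x, ‖q x‖ := integral_congr_ae ((hae.fun_comp norm).symm)
  have hS := measurableSet_simplex (2*n) γ
  have hGint : IntegrableOn (fun t : Fin (2*n) → ℝ => ∏ i, g (t i))
      {t | StrictMono t ∧ ∀ i, t i ∈ Set.Ioo 0 γ} :=
    (Integrable.fintype_prod (f := fun _ => g) fun _ => hgi).integrableOn
  have hA : ∀ᵐ t : Fin (2*n) → ℝ, ∀ i, q (t i) = q' (t i) := by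
    filter_upwards [ae_all_notMem (2*n) (ae_iff.mp hae)] with t ht i
    exact not_not.mp (ht i)
  rw [aCoeff]
  have key : ‖∫ t : Fin (2 * n) → ℝ in {t | StrictMono t ∧ ∀ i, t i ∈ Set.Ioo 0 γ},
      ∏ j : Fin n,
        q (t ⟨2 * (j : ℕ), by have := j.isLt; omega⟩) *
          (starRingEnd ℂ) (q (t ⟨2 * (j : ℕ) + 1, by have := j.isLt; omega⟩)) *
          Complex.exp (2 * Complex.I * l *
            (((t ⟨2 * (j : ℕ) + 1, by have := j.isLt; omega⟩) : ℝ)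
              - (t ⟨2 * (j : ℕ), by have := j.isLt; omega⟩)))‖
      ≤ ∫ t : Fin (2*n) → ℝ in {t | StrictMono t ∧ ∀ i, t i ∈ Set.Ioo 0 γ},
          Real.exp (2*R*γ*n) * ∏ i, g (t i) := by
    refine norm_integral_le_of_norm_le (hGint.const_mul _) ?_
    filter_upwards [ae_restrict_of_ae hA, ae_restrict_mem hS] with t hqt htS
    have hrw : (∏ j : Fin n,
        q (t ⟨2 * (j : ℕ), by have := j.isLt; omega⟩) *
          (starRingEnd ℂ) (q (t ⟨2 * (j : ℕ) + 1, by have := j.isLt; omega⟩)) *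
          Complex.exp (2 * Complex.I * l *
            (((t ⟨2 * (j : ℕ) + 1, by have := j.isLt; omega⟩) : ℝ)
              - (t ⟨2 * (j : ℕ), by have := j.isLt; omega⟩))))
        = ∏ j : Fin n,
        q' (t ⟨2 * (j : ℕ), by have := j.isLt; omega⟩) *
          (starRingEnd ℂ) (q' (t ⟨2 * (j : ℕ) + 1, by have := j.isLt; omega⟩)) *
          Complex.exp (2 * Complex.I * l *
            (((t ⟨2 * (j : ℕ) + 1, by have := j.isLt; omega⟩) : ℝ)
              - (t ⟨2 * (j : ℕ), by have := j.isLt; omega⟩))) :=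
      Finset.prod_congr rfl fun j _ => by rw [hqt, hqt]
    rw [hrw, dirac_integrand_eq q' n l t, norm_mul, norm_diracH]
    have hD1 : 0 ≤ diracD n t := diracD_nonneg htS.1
    have hD2 : diracD n t ≤ n * γ := diracD_le htS.2
    have hexp : ‖Complex.exp (2 * Complex.I * l * ((diracD n t : ℝ) : ℂ))‖
        ≤ Real.exp (2 * R * (n * γ)) := by
      refine norm_cexp_le ?_ hl ?_
      · rw [_root_.abs_of_nonneg hD1]; exact hD2
      · positivity
    calc (∏ i, ‖q' (t i)‖) * ‖Complex.exp (2 * Complex.I * l * ((diracD n t : ℝ) : ℂ))‖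
        ≤ (∏ i, g (t i)) * Real.exp (2 * R * (n * γ)) := by
          refine mul_le_mul_of_nonneg_left hexp ?_
          exact Finset.prod_nonneg fun i _ => norm_nonneg _
      _ = Real.exp (2*R*γ*n) * ∏ i, g (t i) := by
          rw [mul_comm]
          congr 2
          ring
  refine key.trans ?_
  rw [MeasureTheory.integral_const_mul]
  have hsimp := simplex_integral_le (2*n) γ hgi hg0
  rw [hgint_eq] at hsimp
  rw [mul_div_assoc]
  exact mul_le_mul_of_nonneg_left hsimp (Real.exp_nonneg _)

theorem aCoeff_differentiable (γ : ℝ) (hγ : 0 < γ) (q : ℝ → ℂ) (hq : Integrable q) (n : ℕ) :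
    Differentiable ℂ (aCoeff γ q n) := by
  classical
  set q' := hq.1.mk q with hq'def
  have hq'm : Measurable q' := hq.1.stronglyMeasurable_mk.measurable
  have hae : q =ᵐ[volume] q' := hq.1.ae_eq_mk
  set g : ℝ → ℝ := fun x => ‖q' x‖ with hg
  have hgi : Integrable g := (hq.congr hae).norm
  set S : Set (Fin (2*n) → ℝ) := {t | StrictMono t ∧ ∀ i, t i ∈ Set.Ioo 0 γ} with hSdef
  have hS : MeasurableSet S := measurableSet_simplex (2*n) γ
  have hGint : IntegrableOn (fun t : Fin (2*n) → ℝ => ∏ i, g (t i)) S :=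
    (Integrable.fintype_prod (f := fun _ => g) fun _ => hgi).integrableOn
  have hA : ∀ᵐ t : Fin (2*n) → ℝ, ∀ i, q (t i) = q' (t i) := by
    filter_upwards [ae_all_notMem (2*n) (ae_iff.mp hae)] with t ht i
    exact not_not.mp (ht i)
  set F : ℂ → (Fin (2*n) → ℝ) → ℂ := fun l t =>
    ∏ j : Fin n,
      q (t ⟨2 * (j : ℕ), by have := j.isLt; omega⟩) *
        (starRingEnd ℂ) (q (t ⟨2 * (j : ℕ) + 1, by have := j.isLt; omega⟩)) *
        Complex.exp (2 * Complex.I * l *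
          (((t ⟨2 * (j : ℕ) + 1, by have := j.isLt; omega⟩) : ℝ)
            - (t ⟨2 * (j : ℕ), by have := j.isLt; omega⟩))) with hF
  have hFeq : ∀ l t, F l t = diracH q n t * Complex.exp (2 * Complex.I * l * (diracD n t : ℂ)) :=
    fun l t => dirac_integrand_eq q n l t
  have hDm : Measurable (diracD n) := by
    unfold diracD
    exact Finset.measurable_sum _ fun j _ =>
      (measurable_pi_apply _).sub (measurable_pi_apply _)
  have hHm : Measurable (diracH q' n) := by
    unfold diracH
    exact Finset.measurable_prod _ fun j _ =>
      (hq'm.comp (measurable_pi_apply _)).mul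
        (Complex.continuous_conj.measurable.comp (hq'm.comp (measurable_pi_apply _)))
  set M : ℂ → (Fin (2*n) → ℝ) → ℂ := fun l t =>
    diracH q' n t * Complex.exp (2 * Complex.I * l * (diracD n t : ℂ)) with hM
  have hMm : ∀ l, Measurable (M l) := fun l =>
    hHm.mul (Complex.continuous_exp.measurable.comp
      (Measurable.const_mul (Complex.measurable_ofReal.comp hDm) (2 * Complex.I * l)))
  have hFM : ∀ l, F l =ᵐ[volume.restrict S] M l := by
    intro l
    filter_upwards [ae_restrict_of_ae hA] with t hqt
    have hrw : F l t = ∏ j : Fin n,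
        q' (t ⟨2 * (j : ℕ), by have := j.isLt; omega⟩) *
          (starRingEnd ℂ) (q' (t ⟨2 * (j : ℕ) + 1, by have := j.isLt; omega⟩)) *
          Complex.exp (2 * Complex.I * l *
            (((t ⟨2 * (j : ℕ) + 1, by have := j.isLt; omega⟩) : ℝ)
              - (t ⟨2 * (j : ℕ), by have := j.isLt; omega⟩))) :=
      Finset.prod_congr rfl fun j _ => by rw [hqt, hqt]
    rw [hM, hrw, dirac_integrand_eq q' n l t]
  have haC : aCoeff γ q n = fun l => ∫ t in S, F l t := rfl
  rw [haC]
  intro x₀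
  set R : ℝ := ‖x₀‖ + 1 with hR
  have hR0 : 0 ≤ R := by positivity
  have hnγ : (0:ℝ) ≤ n * γ := by positivity
  set bound : (Fin (2*n) → ℝ) → ℝ := fun t =>
    (2 * (n * γ)) * (Real.exp (2 * R * (n * γ)) * ∏ i, g (t i)) with hbound
  have hbound_int : Integrable bound (volume.restrict S) :=
    ((hGint.const_mul _).const_mul _)
  have key := hasDerivAt_integral_of_dominated_loc_of_deriv_le
    (F := F) (F' := fun l t => (2 * Complex.I * (diracD n t : ℂ)) * F l t)
    (x₀ := x₀) (s := Metric.ball x₀ 1) (bound := bound) (μ := volume.restrict S)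
    (Metric.ball_mem_nhds x₀ one_pos)
    (Filter.Eventually.of_forall fun l => ((hMm l).aestronglyMeasurable).congr (hFM l).symm)
    ?_ ?_ ?_ hbound_int ?_
  · exact key.2.differentiableAt
  · -- Integrable (F x₀)
    refine Integrable.mono' ((hGint.const_mul (Real.exp (2 * R * (n * γ)))))
      (((hMm x₀).aestronglyMeasurable).congr (hFM x₀).symm) ?_
    filter_upwards [ae_restrict_of_ae hA, ae_restrict_mem hS] with t hqt htS
    have hrw : F x₀ t = ∏ j : Fin n,
        q' (t ⟨2 * (j : ℕ), by have := j.isLt; omega⟩) *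
          (starRingEnd ℂ) (q' (t ⟨2 * (j : ℕ) + 1, by have := j.isLt; omega⟩)) *
          Complex.exp (2 * Complex.I * x₀ *
            (((t ⟨2 * (j : ℕ) + 1, by have := j.isLt; omega⟩) : ℝ)
              - (t ⟨2 * (j : ℕ), by have := j.isLt; omega⟩))) :=
      Finset.prod_congr rfl fun j _ => by rw [hqt, hqt]
    rw [hrw, dirac_integrand_eq q' n x₀ t, norm_mul, norm_diracH]
    have hD1 : 0 ≤ diracD n t := diracD_nonneg htS.1
    have hD2 : diracD n t ≤ n * γ := diracD_le htS.2
    have hexp : ‖Complex.exp (2 * Complex.I * x₀ * ((diracD n t : ℝ) : ℂ))‖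
        ≤ Real.exp (2 * R * (n * γ)) := by
      refine norm_cexp_le ?_ (by rw [hR]; linarith [norm_nonneg x₀]) hnγ
      rw [_root_.abs_of_nonneg hD1]; exact hD2
    calc (∏ i, ‖q' (t i)‖) * ‖Complex.exp (2 * Complex.I * x₀ * ((diracD n t : ℝ) : ℂ))‖
        ≤ (∏ i, g (t i)) * Real.exp (2 * R * (n * γ)) :=
          mul_le_mul_of_nonneg_left hexp (Finset.prod_nonneg fun i _ => norm_nonneg _)
      _ = Real.exp (2 * R * (n * γ)) * ∏ i, g (t i) := mul_comm _ _
  · -- AEStronglyMeasurable (F' x₀)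
    refine AEStronglyMeasurable.congr (f := fun t => (2 * Complex.I * (diracD n t : ℂ)) * M x₀ t)
      ?_ ?_
    · exact ((Measurable.const_mul (Complex.measurable_ofReal.comp hDm) (2*Complex.I)).mul
        (hMm x₀)).aestronglyMeasurable
    · filter_upwards [hFM x₀] with t ht
      rw [ht]
  · -- bound on F'
    filter_upwards [ae_restrict_of_ae hA, ae_restrict_mem hS] with t hqt htS l hl
    have hD1 : 0 ≤ diracD n t := diracD_nonneg htS.1
    have hD2 : diracD n t ≤ n * γ := diracD_le htS.2
    have hl' : ‖l‖ ≤ R := by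
      have h1 : ‖l - x₀‖ < 1 := by rwa [Metric.mem_ball, dist_eq_norm] at hl
      calc ‖l‖ = ‖x₀ + (l - x₀)‖ := by ring_nf
        _ ≤ ‖x₀‖ + ‖l - x₀‖ := norm_add_le _ _
        _ ≤ R := by rw [hR]; linarith
    have hrw : F l t = ∏ j : Fin n,
        q' (t ⟨2 * (j : ℕ), by have := j.isLt; omega⟩) *
          (starRingEnd ℂ) (q' (t ⟨2 * (j : ℕ) + 1, by have := j.isLt; omega⟩)) *
          Complex.exp (2 * Complex.I * l *
            (((t ⟨2 * (j : ℕ) + 1, by have := j.isLt; omega⟩) : ℝ)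
              - (t ⟨2 * (j : ℕ), by have := j.isLt; omega⟩))) :=
      Finset.prod_congr rfl fun j _ => by rw [hqt, hqt]
    have hexp : ‖Complex.exp (2 * Complex.I * l * ((diracD n t : ℝ) : ℂ))‖
        ≤ Real.exp (2 * R * (n * γ)) := by
      refine norm_cexp_le ?_ hl' hnγ
      rw [_root_.abs_of_nonneg hD1]; exact hD2
    have h2ID : ‖2 * Complex.I * ((diracD n t : ℝ) : ℂ)‖ ≤ 2 * (n * γ) := by
      rw [norm_mul, norm_mul]
      simp only [Complex.norm_ofNat, Complex.norm_I, Complex.norm_real, Real.norm_eq_abs]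
      rw [mul_one, _root_.abs_of_nonneg hD1]
      nlinarith
    have hprod0 : (0:ℝ) ≤ ∏ i, ‖q' (t i)‖ := Finset.prod_nonneg fun i _ => norm_nonneg _
    have hnormF : ‖F l t‖ ≤ (∏ i, ‖q' (t i)‖) * Real.exp (2 * R * (n * γ)) := by
      rw [hrw, dirac_integrand_eq q' n l t, norm_mul, norm_diracH]
      exact mul_le_mul_of_nonneg_left hexp hprod0
    calc ‖(2 * Complex.I * ((diracD n t : ℝ) : ℂ)) * F l t‖
        = ‖2 * Complex.I * ((diracD n t : ℝ) : ℂ)‖ * ‖F l t‖ := norm_mul _ _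
      _ ≤ (2 * (n * γ)) * ((∏ i, ‖q' (t i)‖) * Real.exp (2 * R * (n * γ))) := by
          refine mul_le_mul h2ID hnormF (norm_nonneg _) (by positivity)
      _ = bound t := by simp only [hbound, hg]; ring
  · -- HasDerivAt
    refine Filter.Eventually.of_forall fun t => fun l _ => ?_
    have hcore : HasDerivAt (fun l : ℂ => diracH q n t
          * Complex.exp (2 * Complex.I * l * ((diracD n t : ℝ) : ℂ)))
        ((2 * Complex.I * ((diracD n t : ℝ) : ℂ)) * (diracH q n t
          * Complex.exp (2 * Complex.I * l * ((diracD n t : ℝ) : ℂ)))) l := by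
      have h1 : HasDerivAt (fun l : ℂ => 2 * Complex.I * l * ((diracD n t : ℝ) : ℂ))
          (2 * Complex.I * ((diracD n t : ℝ) : ℂ)) l := by
        simpa using ((hasDerivAt_id l).const_mul (2 * Complex.I)).mul_const
          ((diracD n t : ℝ) : ℂ)
      have h2 := h1.cexp
      have h3 := h2.const_mul (diracH q n t)
      rw [show (2 * Complex.I * ((diracD n t : ℝ) : ℂ)) * (diracH q n t
          * Complex.exp (2 * Complex.I * l * ((diracD n t : ℝ) : ℂ)))
          = diracH q n t * (Complex.exp (2 * Complex.I * l * ((diracD n t : ℝ) : ℂ))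
            * (2 * Complex.I * ((diracD n t : ℝ) : ℂ))) by ring]
      exact h3
    have : HasDerivAt (fun l => F l t)
        ((2 * Complex.I * ((diracD n t : ℝ) : ℂ)) * (diracH q n t
          * Complex.exp (2 * Complex.I * l * ((diracD n t : ℝ) : ℂ)))) l := by
      refine hcore.congr_of_eventuallyEq ?_
      exact Filter.Eventually.of_forall fun l' => (hFeq l' t)
    have h4 : (2 * Complex.I * ((diracD n t : ℝ) : ℂ)) * F l t
        = (2 * Complex.I * ((diracD n t : ℝ) : ℂ))
          * (diracH q n t * Complex.exp (2 * Complex.I * l * ((diracD n t : ℝ) : ℂ))) := by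
      rw [hFeq l t]
    show HasDerivAt (fun x => F x t) ((2 * Complex.I * ((diracD n t : ℝ) : ℂ)) * F l t) l
    rw [h4]
    exact this

/-- The function `a(λ) = 1 + Σ_{n≥1} a_n(λ)`. -/
noncomputable def diracA (γ : ℝ) (q : ℝ → ℂ) (l : ℂ) : ℂ :=
  1 + ∑' n : ℕ, aCoeff γ q (n + 1) l

theorem dirac_summable_bound (γ R K : ℝ) (hK : 0 ≤ K) :
    Summable (fun n : ℕ =>
      Real.exp (2*R*γ*((n+1 : ℕ) : ℝ)) * K ^ (2*(n+1)) / (Nat.factorial (2*(n+1)))) := by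
  set A : ℝ := Real.exp (2*R*γ) * K^2 with hA
  have hA0 : 0 ≤ A := by positivity
  have heq : ∀ n : ℕ, Real.exp (2*R*γ*((n+1 : ℕ) : ℝ)) * K ^ (2*(n+1))
      = A ^ (n+1) := by
    intro n
    rw [hA, mul_pow, pow_mul, mul_comm (2*R*γ) (((n+1 : ℕ)) : ℝ), Real.exp_nat_mul]
  have hsum : Summable (fun n : ℕ => A ^ (n+1) / (Nat.factorial (n+1))) :=
    (summable_nat_add_iff 1).mpr (Real.summable_pow_div_factorial A)
  refine Summable.of_nonneg_of_le (fun n => by positivity) (fun n => ?_) hsum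
  rw [heq n]
  refine div_le_div_of_nonneg_left (by positivity) (by positivity) ?_
  exact_mod_cast Nat.factorial_le (by omega)

/-- The series `a(λ) = 1 + Σ_{n≥1} a_n(λ)` converges uniformly on bounded subsets of `ℂ`
and defines an entire function. -/
theorem diracA_entire (γ : ℝ) (hγ : 0 < γ) (q : ℝ → ℂ)
    (hq : Integrable q) (hsupp : Function.support q ⊆ Set.Icc 0 γ) :
    (∀ C : Set ℂ, Bornology.IsBounded C →
      TendstoUniformlyOn
        (fun N l => 1 + ∑ n ∈ Finset.range N, aCoeff γ q (n + 1) l)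
        (diracA γ q) atTop C) ∧
    Differentiable ℂ (diracA γ q) := by
  set K : ℝ := ∫ x, ‖q x‖ with hK
  have hK0 : 0 ≤ K := integral_nonneg fun x => norm_nonneg _
  constructor
  · intro C hC
    obtain ⟨r, hr⟩ := hC.subset_closedBall 0
    set R : ℝ := max r 0 with hR
    have hR0 : 0 ≤ R := le_max_right _ _
    have hsub : C ⊆ Metric.closedBall 0 R :=
      hr.trans (Metric.closedBall_subset_closedBall (le_max_left _ _))
    have hu := dirac_summable_bound γ R K hK0
    have h := tendstoUniformlyOn_tsum_nat hu (f := fun n l => aCoeff γ q (n+1) l) (s := C)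
      (fun n l hl => by
        refine aCoeff_norm_le γ hγ q hq R hR0 (n+1) ?_
        have := hsub hl
        rwa [Metric.mem_closedBall, dist_zero_right] at this)
    rw [Metric.tendstoUniformlyOn_iff] at h ⊢
    intro ε hε
    filter_upwards [h ε hε] with N hN l hl
    have := hN l hl
    simpa [diracA, dist_add_left] using this
  · intro x₀
    set R : ℝ := ‖x₀‖ + 1 with hR
    have hR0 : 0 ≤ R := by positivity
    have hu := dirac_summable_bound γ R K hK0
    have hd : DifferentiableOn ℂ (fun l => ∑' n : ℕ, aCoeff γ q (n+1) l)
        (Metric.ball (0:ℂ) R) := by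
      refine differentiableOn_tsum_of_summable_norm hu
        (fun n => (aCoeff_differentiable γ hγ q hq (n+1)).differentiableOn)
        Metric.isOpen_ball (fun n w hw => ?_)
      refine aCoeff_norm_le γ hγ q hq R hR0 (n+1) ?_
      rw [Metric.mem_ball, dist_zero_right] at hw
      exact hw.le
    have hd2 : DifferentiableOn ℂ (diracA γ q) (Metric.ball (0:ℂ) R) := by
      have : diracA γ q = fun l => 1 + ∑' n : ℕ, aCoeff γ q (n+1) l := rfl
      rw [this]
      exact (differentiableOn_const 1).add hd
    refine hd2.differentiableAt (Metric.isOpen_ball.mem_nhds ?_)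
    rw [Metric.mem_ball, dist_zero_right, hR]
    linarith
end

section
/- Let γ > 0 and let q ∈ L¹(ℝ;ℂ) with supp q ⊆ [0,γ]. Then for every λ ∈ ℂ with ε = Im λ, the function a satisfies |a(λ)| ≤ exp(γ(|ε| − ε))·cosh(‖q‖₁), where ‖q‖₁ = ∫_ℝ |q(x)| dx. -/
open MeasureTheory Complex Real Filter

private lemma prod_range_two_mul_pair {M : Type*} [CommMonoid M] (g : ℕ → M) (n : ℕ) :
    ∏ i ∈ Finset.range (2 * n), g i = ∏ j ∈ Finset.range n, (g (2 * j) * g (2 * j + 1)) := by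
  induction n with
  | zero => simp
  | succ n ih =>
      have h : 2 * (n + 1) = (2 * n) + 1 + 1 := by ring
      rw [h, Finset.prod_range_succ, Finset.prod_range_succ, ih, Finset.prod_range_succ,
        mul_assoc]

private lemma simplex_perm_disjoint {k : ℕ} {γ : ℝ} :
    Pairwise (Function.onFun Disjoint (fun σ : Equiv.Perm (Fin k) =>
      {t : Fin k → ℝ | StrictMono (t ∘ σ) ∧ ∀ i, t i ∈ Set.Ioo 0 γ})) := by
  intro σ τ hne
  refine Set.disjoint_left.2 fun t ht1 ht2 => hne ?_
  obtain ⟨h1, -⟩ := ht1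
  obtain ⟨h2, -⟩ := ht2
  have hg : StrictMono (fun i => τ.symm (σ i)) := by
    intro i j hij
    have := h1 hij
    have hrw : ∀ b, (t ∘ τ) (τ.symm (σ b)) = (t ∘ σ) b := by
      intro b; simp [Function.comp]
    rw [← hrw i, ← hrw j] at this
    exact h2.lt_iff_lt.mp this
  have hid : (fun i => τ.symm (σ i)) = (id : Fin k → Fin k) := by
    have hwf : WellFoundedLT (Fin k) := inferInstance
    refine (StrictMono.range_inj hg strictMono_id).1 ?_
    rw [Set.range_id]
    exact Set.range_eq_univ.2 fun i => ⟨σ.symm (τ i), by simp⟩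
  ext i
  have := congrFun hid i
  simp only [id] at this
  exact (Equiv.symm_apply_eq τ).1 this |>.symm ▸ rfl

private lemma simplex_measurableSet {k : ℕ} {γ : ℝ} (σ : Equiv.Perm (Fin k)) :
    MeasurableSet {t : Fin k → ℝ | StrictMono (t ∘ σ) ∧ ∀ i, t i ∈ Set.Ioo 0 γ} := by
  have h1 : MeasurableSet {t : Fin k → ℝ | StrictMono (t ∘ σ)} := by
    have he : {t : Fin k → ℝ | StrictMono (t ∘ σ)} =
        ⋂ (i : Fin k) (j : Fin k) (_ : i < j), {t : Fin k → ℝ | t (σ i) < t (σ j)} := by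
      ext t
      simp only [Set.mem_setOf_eq, Set.mem_iInter, StrictMono, Function.comp]
    rw [he]
    exact MeasurableSet.iInter fun i => MeasurableSet.iInter fun j =>
      MeasurableSet.iInter fun _ =>
        measurableSet_lt (measurable_pi_apply _) (measurable_pi_apply _)
  have h2 : MeasurableSet {t : Fin k → ℝ | ∀ i, t i ∈ Set.Ioo 0 γ} := by
    have he : {t : Fin k → ℝ | ∀ i, t i ∈ Set.Ioo 0 γ} =
        ⋂ (i : Fin k), (fun t : Fin k → ℝ => t i) ⁻¹' Set.Ioo 0 γ := by
      ext t; simp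
    rw [he]
    exact MeasurableSet.iInter fun i => (measurable_pi_apply i) measurableSet_Ioo
  exact h1.inter h2

private lemma simplex_perm_setIntegral {k : ℕ} (γ : ℝ) (f : ℝ → ℝ) (σ : Equiv.Perm (Fin k)) :
    (∫ t in {t : Fin k → ℝ | StrictMono (t ∘ σ) ∧ ∀ i, t i ∈ Set.Ioo 0 γ}, ∏ i, f (t i))
      = ∫ t in {t : Fin k → ℝ | StrictMono t ∧ ∀ i, t i ∈ Set.Ioo 0 γ}, ∏ i, f (t i) := by
  set e := MeasurableEquiv.piCongrLeft (fun _ : Fin k => ℝ) σ.symm with he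
  have hmp := MeasureTheory.volume_measurePreserving_piCongrLeft (fun _ : Fin k => ℝ) σ.symm
  have hefun : ∀ t : Fin k → ℝ, e t = fun b => t (σ b) := by
    intro t; funext b
    have h := MeasurableEquiv.piCongrLeft_apply_apply (β := fun _ : Fin k => ℝ) σ.symm t (σ b)
    simpa [he] using h
  have hpre : e ⁻¹' {t : Fin k → ℝ | StrictMono t ∧ ∀ i, t i ∈ Set.Ioo 0 γ}
      = {t : Fin k → ℝ | StrictMono (t ∘ σ) ∧ ∀ i, t i ∈ Set.Ioo 0 γ} := by
    ext t
    simp only [Set.mem_preimage, Set.mem_setOf_eq, hefun t]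
    constructor
    · rintro ⟨h1, h2⟩
      exact ⟨h1, fun i => by simpa using h2 (σ.symm i)⟩
    · rintro ⟨h1, h2⟩
      exact ⟨h1, fun i => h2 (σ i)⟩
  have key := hmp.setIntegral_preimage_emb e.measurableEmbedding
    (fun t => ∏ i, f (t i)) {t : Fin k → ℝ | StrictMono t ∧ ∀ i, t i ∈ Set.Ioo 0 γ}
  rw [hpre] at key
  rw [← key]
  refine setIntegral_congr_fun (simplex_measurableSet σ) fun t _ => ?_
  show ∏ i, f (t i) = ∏ i, f (e t i)
  simp only [hefun t]
  exact (Equiv.prod_comp σ fun i => f (t i)).symm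

private lemma simplex_setIntegral_le {k : ℕ} (γ : ℝ) {f : ℝ → ℝ} (hf : Integrable f)
    (hf0 : ∀ x, 0 ≤ f x) :
    (∫ t in {t : Fin k → ℝ | StrictMono t ∧ ∀ i, t i ∈ Set.Ioo 0 γ}, ∏ i, f (t i))
      ≤ (∫ x, f x) ^ k / (Nat.factorial k : ℝ) := by
  have hGint : Integrable (fun t : Fin k → ℝ => ∏ i, f (t i)) :=
    Integrable.fintype_prod (f := fun _ : Fin k => f) fun _ => hf
  have hGnn : ∀ t : Fin k → ℝ, 0 ≤ ∏ i, f (t i) := fun t =>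
    Finset.prod_nonneg fun i _ => hf0 _
  set S : Equiv.Perm (Fin k) → Set (Fin k → ℝ) :=
    fun σ => {t : Fin k → ℝ | StrictMono (t ∘ σ) ∧ ∀ i, t i ∈ Set.Ioo 0 γ} with hS
  have hSone : S 1 = {t : Fin k → ℝ | StrictMono t ∧ ∀ i, t i ∈ Set.Ioo 0 γ} := by
    ext t
    simp [hS, Function.comp_def]
  have key : ((Nat.factorial k : ℝ) : ℝ) * ∫ t in S 1, ∏ i, f (t i) ≤ (∫ x, f x) ^ k := by
    calc ((Nat.factorial k : ℝ) : ℝ) * ∫ t in S 1, ∏ i, f (t i)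
        = ∑ σ : Equiv.Perm (Fin k), ∫ t in S σ, ∏ i, f (t i) := by
          rw [Finset.sum_congr rfl fun σ _ =>
            (by rw [hSone]; exact simplex_perm_setIntegral γ f σ :
              (∫ t in S σ, ∏ i, f (t i)) = ∫ t in S 1, ∏ i, f (t i))]
          rw [Finset.sum_const, Finset.card_univ, Fintype.card_perm, Fintype.card_fin,
            nsmul_eq_mul]
      _ = ∫ t in ⋃ σ ∈ (Finset.univ : Finset (Equiv.Perm (Fin k))), S σ, ∏ i, f (t i) := by
          rw [integral_biUnion_finset Finset.univ (fun σ _ => simplex_measurableSet σ)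
            (fun σ _ τ _ hne => simplex_perm_disjoint hne)
            (fun σ _ => hGint.integrableOn)]
      _ ≤ ∫ t : Fin k → ℝ, ∏ i, f (t i) :=
          setIntegral_le_integral hGint (Filter.Eventually.of_forall hGnn)
      _ = (∫ x, f x) ^ k := by
          rw [MeasureTheory.volume_pi, MeasureTheory.integral_fintype_prod_eq_pow (ι := Fin k) f, Fintype.card_fin]
  rw [← hSone]
  rw [le_div_iff₀ (by positivity : (0:ℝ) < ((Nat.factorial k : ℝ) : ℝ))]
  linarith [key]

private lemma aCoeff_le (γ : ℝ) (hγ : 0 ≤ γ) (q : ℝ → ℂ) (hq : Integrable q) (l : ℂ) (m : ℕ) :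
    ‖aCoeff γ q m l‖ ≤ Real.exp (γ * (|l.im| - l.im)) *
      ((∫ x, ‖q x‖) ^ (2 * m) / (Nat.factorial (2 * m) : ℝ)) := by
  set C := Real.exp (γ * (|l.im| - l.im)) with hCdef
  have hC0 : 0 < C := Real.exp_pos _
  have hGint : Integrable (fun t : Fin (2 * m) → ℝ => ∏ i, ‖q (t i)‖) :=
    Integrable.fintype_prod (f := fun _ : Fin (2 * m) => fun x => ‖q x‖) fun _ => hq.norm
  have hSmeas : MeasurableSet {t : Fin (2 * m) → ℝ | StrictMono t ∧ ∀ i, t i ∈ Set.Ioo 0 γ} := by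
    have h := simplex_measurableSet (γ := γ) (1 : Equiv.Perm (Fin (2 * m)))
    simpa [Function.comp_def] using h
  -- pointwise bound
  have hpoint : ∀ t : Fin (2 * m) → ℝ,
      t ∈ {t : Fin (2 * m) → ℝ | StrictMono t ∧ ∀ i, t i ∈ Set.Ioo 0 γ} →
      ‖∏ j : Fin m,
        q (t ⟨2 * (j : ℕ), by have := j.isLt; omega⟩) *
          (starRingEnd ℂ) (q (t ⟨2 * (j : ℕ) + 1, by have := j.isLt; omega⟩)) *
          Complex.exp (2 * Complex.I * l *
            (((t ⟨2 * (j : ℕ) + 1, by have := j.isLt; omega⟩) : ℝ)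
              - (t ⟨2 * (j : ℕ), by have := j.isLt; omega⟩)))‖
        ≤ C * ∏ i, ‖q (t i)‖ := by
    rintro t ⟨hst, hioo⟩
    set u : ℕ → ℝ := fun i => if h : i < 2 * m then t ⟨i, h⟩ else 0 with hudef
    have hu : ∀ (i : ℕ) (h : i < 2 * m), u i = t ⟨i, h⟩ := fun i h => dif_pos h
    set D : ℝ := ∑ j ∈ Finset.range m, (u (2 * j + 1) - u (2 * j)) with hDdef
    have hD0 : 0 ≤ D := by
      refine Finset.sum_nonneg fun j hj => ?_
      have hjm : j < m := Finset.mem_range.1 hj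
      rw [hu (2 * j) (by omega), hu (2 * j + 1) (by omega)]
      have := hst (show (⟨2 * j, by omega⟩ : Fin (2 * m)) < ⟨2 * j + 1, by omega⟩ from by
        simp [Fin.mk_lt_mk])
      linarith
    have hDγ : D ≤ γ := by
      rcases Nat.eq_zero_or_pos m with rfl | hm
      · simpa [hDdef] using hγ
      · have himg : D = ∑ i ∈ (Finset.range m).image (fun j => 2 * j), (u (i + 1) - u i) := by
          rw [Finset.sum_image (fun a _ b _ h => by omega)]
        have hsub : (Finset.range m).image (fun j => 2 * j) ⊆ Finset.range (2 * m - 1) := by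
          intro i hi
          simp only [Finset.mem_image, Finset.mem_range] at hi ⊢
          obtain ⟨j, hj, rfl⟩ := hi; omega
        have hnn : ∀ i ∈ Finset.range (2 * m - 1),
            i ∉ (Finset.range m).image (fun j => 2 * j) → 0 ≤ u (i + 1) - u i := by
          intro i hi _
          have him : i < 2 * m - 1 := Finset.mem_range.1 hi
          rw [hu i (by omega), hu (i + 1) (by omega)]
          have := hst.monotone (show (⟨i, by omega⟩ : Fin (2 * m)) ≤ ⟨i + 1, by omega⟩ from by
            simp [Fin.mk_le_mk])
          linarith
        calc D ≤ ∑ i ∈ Finset.range (2 * m - 1), (u (i + 1) - u i) := by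
              rw [himg]; exact Finset.sum_le_sum_of_subset_of_nonneg hsub hnn
          _ = u (2 * m - 1) - u 0 := Finset.sum_range_sub u (2 * m - 1)
          _ ≤ γ := by
              have h1 := (hioo ⟨2 * m - 1, by omega⟩).2
              have h2 := (hioo ⟨0, by omega⟩).1
              rw [hu (2 * m - 1) (by omega), hu 0 (by omega)]
              linarith
    have hexp_le : Real.exp (-(2 * l.im) * D) ≤ C := by
      rw [hCdef]
      apply Real.exp_le_exp.2
      rcases abs_cases l.im with ⟨h1, h2⟩ | ⟨h1, h2⟩
      · rw [h1]; nlinarith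
      · rw [h1]; nlinarith
    have hP : (∏ j : Fin m,
        q (t ⟨2 * (j : ℕ), by have := j.isLt; omega⟩) *
          (starRingEnd ℂ) (q (t ⟨2 * (j : ℕ) + 1, by have := j.isLt; omega⟩)) *
          Complex.exp (2 * Complex.I * l *
            (((t ⟨2 * (j : ℕ) + 1, by have := j.isLt; omega⟩) : ℝ)
              - (t ⟨2 * (j : ℕ), by have := j.isLt; omega⟩))))
        = ∏ j ∈ Finset.range m,
            (q (u (2 * j)) * (starRingEnd ℂ) (q (u (2 * j + 1))) *
              Complex.exp (2 * Complex.I * l *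
                (((u (2 * j + 1) : ℝ) : ℂ) - ((u (2 * j) : ℝ) : ℂ)))) := by
      rw [← Fin.prod_univ_eq_prod_range (fun j =>
        q (u (2 * j)) * (starRingEnd ℂ) (q (u (2 * j + 1))) *
          Complex.exp (2 * Complex.I * l *
            (((u (2 * j + 1) : ℝ) : ℂ) - ((u (2 * j) : ℝ) : ℂ)))) m]
      refine Finset.prod_congr rfl fun j _ => ?_
      rw [hu (2 * (j : ℕ)) (by have := j.isLt; omega), hu (2 * (j : ℕ) + 1)
        (by have := j.isLt; omega)]
    have hFc : ∀ j : ℕ, ‖q (u (2 * j)) * (starRingEnd ℂ) (q (u (2 * j + 1))) *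
        Complex.exp (2 * Complex.I * l *
          (((u (2 * j + 1) : ℝ) : ℂ) - ((u (2 * j) : ℝ) : ℂ)))‖
        = (‖q (u (2 * j))‖ * ‖q (u (2 * j + 1))‖) *
            Real.exp (-(2 * l.im) * (u (2 * j + 1) - u (2 * j))) := by
      intro j
      rw [norm_mul, norm_mul, RCLike.norm_conj,
        Complex.norm_exp]
      have hre : (2 * Complex.I * l *
          (((u (2 * j + 1) : ℝ) : ℂ) - ((u (2 * j) : ℝ) : ℂ))).re
          = -(2 * l.im) * (u (2 * j + 1) - u (2 * j)) := by
        simp [Complex.mul_re, Complex.mul_im]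
      rw [hre, mul_assoc]
    have hGt : ∏ i ∈ Finset.range (2 * m), ‖q (u i)‖ = ∏ i : Fin (2 * m), ‖q (t i)‖ := by
      rw [← Fin.prod_univ_eq_prod_range (fun i => ‖q (u i)‖) (2 * m)]
      exact Finset.prod_congr rfl fun i _ => by rw [hu i.val i.isLt, Fin.eta]
    calc ‖∏ j : Fin m, _‖ = ∏ j ∈ Finset.range m, ((‖q (u (2 * j))‖ * ‖q (u (2 * j + 1))‖) *
            Real.exp (-(2 * l.im) * (u (2 * j + 1) - u (2 * j)))) := by
          rw [hP, norm_prod]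
          exact Finset.prod_congr rfl fun j _ => hFc j
      _ = (∏ i : Fin (2 * m), ‖q (t i)‖) * Real.exp (-(2 * l.im) * D) := by
          rw [Finset.prod_mul_distrib, ← prod_range_two_mul_pair (fun i => ‖q (u i)‖) m, hGt,
            ← Real.exp_sum, ← Finset.mul_sum, hDdef]
      _ ≤ (∏ i : Fin (2 * m), ‖q (t i)‖) * C := by
          refine mul_le_mul_of_nonneg_left hexp_le ?_
          exact Finset.prod_nonneg fun i _ => norm_nonneg _
      _ = C * ∏ i : Fin (2 * m), ‖q (t i)‖ := mul_comm _ _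
  -- assembling
  unfold aCoeff
  calc ‖∫ t : Fin (2 * m) → ℝ in {t | StrictMono t ∧ ∀ i, t i ∈ Set.Ioo 0 γ}, ∏ j : Fin m,
        q (t ⟨2 * (j : ℕ), by have := j.isLt; omega⟩) *
          (starRingEnd ℂ) (q (t ⟨2 * (j : ℕ) + 1, by have := j.isLt; omega⟩)) *
          Complex.exp (2 * Complex.I * l *
            (((t ⟨2 * (j : ℕ) + 1, by have := j.isLt; omega⟩) : ℝ)
              - (t ⟨2 * (j : ℕ), by have := j.isLt; omega⟩)))‖
      ≤ ∫ t in {t : Fin (2 * m) → ℝ | StrictMono t ∧ ∀ i, t i ∈ Set.Ioo 0 γ}, ‖∏ j : Fin m,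
        q (t ⟨2 * (j : ℕ), by have := j.isLt; omega⟩) *
          (starRingEnd ℂ) (q (t ⟨2 * (j : ℕ) + 1, by have := j.isLt; omega⟩)) *
          Complex.exp (2 * Complex.I * l *
            (((t ⟨2 * (j : ℕ) + 1, by have := j.isLt; omega⟩) : ℝ)
              - (t ⟨2 * (j : ℕ), by have := j.isLt; omega⟩)))‖ :=
        norm_integral_le_integral_norm _
    _ ≤ ∫ t in {t : Fin (2 * m) → ℝ | StrictMono t ∧ ∀ i, t i ∈ Set.Ioo 0 γ},
          C * ∏ i, ‖q (t i)‖ := by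
        refine integral_mono_of_nonneg (Filter.Eventually.of_forall fun t => norm_nonneg _)
          ((hGint.const_mul C).integrableOn) ?_
        exact (MeasureTheory.ae_restrict_iff' hSmeas).2 (Filter.Eventually.of_forall hpoint)
    _ = C * ∫ t in {t : Fin (2 * m) → ℝ | StrictMono t ∧ ∀ i, t i ∈ Set.Ioo 0 γ},
          ∏ i, ‖q (t i)‖ := integral_const_mul _ _
    _ ≤ C * ((∫ x, ‖q x‖) ^ (2 * m) / (Nat.factorial (2 * m) : ℝ)) := by
        refine mul_le_mul_of_nonneg_left ?_ hC0.le
        exact simplex_setIntegral_le γ hq.norm fun x => norm_nonneg _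

/-- Bound on the function `a`: `|a(λ)| ≤ exp(γ(|ε| − ε))·cosh(‖q‖₁)` where `ε = Im λ`. -/
theorem diracA_bound (γ : ℝ) (hγ : 0 < γ) (q : ℝ → ℂ)
    (hq : Integrable q) (hsupp : Function.support q ⊆ Set.Icc 0 γ) (l : ℂ) :
    ‖diracA γ q l‖ ≤
      Real.exp (γ * (|l.im| - l.im)) * Real.cosh (∫ x : ℝ, ‖q x‖) := by
  set B := ∫ x : ℝ, ‖q x‖ with hBdef
  set C := Real.exp (γ * (|l.im| - l.im)) with hCdef
  have hBnorm : B = ∫ x, ‖q x‖ := by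
    rw [hBdef]
  have hC1 : 1 ≤ C := Real.one_le_exp (mul_nonneg hγ.le (sub_nonneg.2 (le_abs_self _)))
  have hkey : ∀ n : ℕ, ‖aCoeff γ q (n + 1) l‖
      ≤ C * (B ^ (2 * (n + 1)) / (Nat.factorial (2 * (n + 1)) : ℝ)) := fun n => by
    rw [hBnorm]; exact aCoeff_le γ hγ.le q hq l (n + 1)
  have hcosh : HasSum (fun n : ℕ => B ^ (2 * n) / (Nat.factorial (2 * n) : ℝ)) (Real.cosh B) :=
    Real.hasSum_cosh B
  have hsum0 : Summable (fun n : ℕ => B ^ (2 * n) / (Nat.factorial (2 * n) : ℝ)) :=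
    hcosh.summable
  have hsum1 : Summable (fun n : ℕ =>
      C * (B ^ (2 * (n + 1)) / (Nat.factorial (2 * (n + 1)) : ℝ))) := by
    have := (hsum0.comp_injective (add_left_injective 1)).mul_left C
    simpa [Function.comp] using this
  have hsummable : Summable (fun n : ℕ => ‖aCoeff γ q (n + 1) l‖) :=
    Summable.of_nonneg_of_le (fun n => norm_nonneg _) hkey hsum1
  have htsum_le : (∑' n, ‖aCoeff γ q (n + 1) l‖)
      ≤ ∑' n, C * (B ^ (2 * (n + 1)) / (Nat.factorial (2 * (n + 1)) : ℝ)) :=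
    Summable.tsum_le_tsum hkey hsummable hsum1
  have hsplit : Real.cosh B = B ^ (2 * 0) / (Nat.factorial (2 * 0) : ℝ)
      + ∑' n, B ^ (2 * (n + 1)) / (Nat.factorial (2 * (n + 1)) : ℝ) := by
    rw [← hcosh.tsum_eq]
    exact Summable.tsum_eq_zero_add hsum0
  have h0 : ‖diracA γ q l‖ ≤ 1 + ∑' n, ‖aCoeff γ q (n + 1) l‖ := by
    rw [diracA]
    refine (norm_add_le _ _).trans ?_
    rw [norm_one]
    exact add_le_add_right (norm_tsum_le_tsum_norm hsummable) 1
  calc ‖diracA γ q l‖ ≤ 1 + ∑' n, ‖aCoeff γ q (n + 1) l‖ := h0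
    _ ≤ 1 + ∑' n, C * (B ^ (2 * (n + 1)) / (Nat.factorial (2 * (n + 1)) : ℝ)) := by
        linarith [htsum_le]
    _ ≤ C * Real.cosh B := by
        have hg0 : B ^ (2 * 0) / (Nat.factorial (2 * 0) : ℝ) = 1 := by norm_num
        rw [hsplit, mul_add, hg0, mul_one, ← tsum_mul_left]
        exact add_le_add_left hC1 _
end

section
/- Let γ > 0 and let q ∈ L¹(ℝ;ℂ) with supp q ⊆ [0,γ]. Then for every λ ∈ ℂ with ε = Im λ, the function a satisfies |a(λ) − 1| ≤ exp(γ(|ε| − ε))·(cosh(‖q‖₁) − 1), where ‖q‖₁ = ∫_ℝ |q(x)| dx. -/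
open MeasureTheory Complex Real Filter

namespace DiracAux

open scoped ENNReal NNReal

/-- Pairing a product over `range (2*n)` into `n` consecutive pairs. -/
lemma prod_range_two_mul {M : Type*} [CommMonoid M] (n : ℕ) (f : ℕ → M) :
    ∏ i ∈ Finset.range (2 * n), f i
      = ∏ j ∈ Finset.range n, (f (2 * j) * f (2 * j + 1)) := by
  induction n with
  | zero => simp
  | succ n ih =>
    rw [show 2 * (n + 1) = (2 * n + 1) + 1 by ring,
      Finset.prod_range_succ f (2 * n + 1), Finset.prod_range_succ f (2 * n), ih,
      Finset.prod_range_succ (fun j => f (2 * j) * f (2 * j + 1)) n, mul_assoc]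

/-- Lintegral of a product of one-variable functions over a pi measure. -/
lemma lintegral_pi_prod (k : ℕ) (g : ℝ → ℝ≥0∞) (hg : Measurable g) :
    ∫⁻ x : Fin k → ℝ, ∏ i, g (x i) ∂(Measure.pi fun _ => (volume : Measure ℝ))
      = (∫⁻ y, g y) ^ k := by
  induction k with
  | zero => simp [Measure.pi_univ]
  | succ k ih =>
    have hmp := (measurePreserving_piFinSuccAbove
      (fun _ : Fin (k + 1) => (volume : Measure ℝ)) 0).symm
    have hmeas : Measurable fun x : Fin (k + 1) → ℝ => ∏ i, g (x i) :=
      Finset.measurable_prod _ fun i _ => hg.comp (measurable_pi_apply i)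
    have hmeas' : Measurable fun y : Fin k → ℝ => ∏ i, g (y i) :=
      Finset.measurable_prod _ fun i _ => hg.comp (measurable_pi_apply i)
    rw [← hmp.map_eq, lintegral_map hmeas hmp.measurable]
    simp_rw [MeasurableEquiv.piFinSuccAbove_symm_apply, Fin.insertNthEquiv,
      Equiv.coe_fn_mk, Fin.prod_univ_succ, Fin.insertNth_zero]
    simp only [Fin.zero_succAbove, cast_eq, Fin.cons_zero, Fin.cons_succ]
    rw [lintegral_prod_mul hg.aemeasurable hmeas'.aemeasurable, ih, pow_succ]
    ring

/-- The simplex associated to a permutation. -/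
def simplexSet (γ : ℝ) (k : ℕ) (σ : Equiv.Perm (Fin k)) : Set (Fin k → ℝ) :=
  {t | StrictMono (fun i => t (σ i)) ∧ ∀ i, t i ∈ Set.Ioo 0 γ}

lemma measurableSet_simplexSet (γ : ℝ) (k : ℕ) (σ : Equiv.Perm (Fin k)) :
    MeasurableSet (simplexSet γ k σ) := by
  have h2 : simplexSet γ k σ =
      (⋂ (i : Fin k) (j : Fin k) (_ : i < j), {t : Fin k → ℝ | t (σ i) < t (σ j)})
        ∩ ⋂ i, (fun t : Fin k → ℝ => t i) ⁻¹' Set.Ioo 0 γ := by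
    ext t
    simp only [simplexSet, Set.mem_setOf_eq, Set.mem_inter_iff, Set.mem_iInter,
      Set.mem_preimage]
    constructor
    · exact fun h => ⟨fun i j hij => h.1 hij, h.2⟩
    · exact fun h => ⟨fun i j hij => h.1 i j hij, h.2⟩
  rw [h2]
  apply MeasurableSet.inter
  · refine MeasurableSet.iInter fun i => MeasurableSet.iInter fun j =>
      MeasurableSet.iInter fun _ => ?_
    exact measurableSet_lt (measurable_pi_apply _) (measurable_pi_apply _)
  · exact MeasurableSet.iInter fun i => (measurable_pi_apply i) measurableSet_Ioo

/-- The key simplex bound: `k! ·  ∫_{simplex} ∏ g ≤ (∫_{(0,γ)} g)^k`. -/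
lemma factorial_mul_lintegral_simplex_le (γ : ℝ) (k : ℕ) (g : ℝ → ℝ≥0∞)
    (hg : Measurable g) :
    (k.factorial : ℝ≥0∞) * (∫⁻ t : Fin k → ℝ in simplexSet γ k 1, ∏ i, g (t i))
      ≤ (∫⁻ y in Set.Ioo 0 γ, g y) ^ k := by
  have hπ : (volume : Measure (Fin k → ℝ)) = Measure.pi fun _ => volume := volume_pi
  set g' : ℝ → ℝ≥0∞ := (Set.Ioo 0 γ).indicator g with hg'def
  have hg' : Measurable g' := hg.indicator measurableSet_Ioo
  have hF' : Measurable fun t : Fin k → ℝ => ∏ i, g' (t i) :=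
    Finset.measurable_prod _ fun i _ => hg'.comp (measurable_pi_apply i)
  -- on each simplexSet, ∏ g = ∏ g'
  have hcong : ∀ σ, (∫⁻ t in simplexSet γ k σ, ∏ i, g (t i))
      = ∫⁻ t in simplexSet γ k σ, ∏ i, g' (t i) := by
    intro σ
    refine setLIntegral_congr_fun (measurableSet_simplexSet γ k σ) ?_
    intro t ht
    exact Finset.prod_congr rfl fun i _ => (Set.indicator_of_mem (ht.2 i) g).symm
  -- all σ give same integral
  have hperm : ∀ σ : Equiv.Perm (Fin k),
      (∫⁻ t in simplexSet γ k σ, ∏ i, g' (t i))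
        = ∫⁻ t in simplexSet γ k 1, ∏ i, g' (t i) := by
    intro σ
    have hmp0 := measurePreserving_piCongrLeft (fun _ : Fin k => (volume : Measure ℝ)) σ.symm
    rw [← hπ] at hmp0
    set ψ := MeasurableEquiv.piCongrLeft (fun _ : Fin k => ℝ) σ.symm with hψdef
    have hψ : ∀ (t : Fin k → ℝ) (j : Fin k), ψ t j = t (σ j) := by
      intro t j
      have h := Equiv.piCongrLeft_apply_apply (fun _ : Fin k => ℝ) σ.symm t (σ j)
      rw [Equiv.symm_apply_apply] at h
      simpa [hψdef, MeasurableEquiv.coe_piCongrLeft] using h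
    have hmap : (∫⁻ t in simplexSet γ k 1, ∏ i, g' (t i))
        = ∫⁻ t in ψ ⁻¹' simplexSet γ k 1, ∏ i, g' (ψ t i) := by
      have h := setLIntegral_map (μ := (volume : Measure (Fin k → ℝ)))
        (measurableSet_simplexSet γ k 1) hF' hmp0.measurable
      rw [hmp0.map_eq] at h
      exact h
    have hpre : ψ ⁻¹' simplexSet γ k 1 = simplexSet γ k σ := by
      ext t
      simp only [Set.mem_preimage, simplexSet, Set.mem_setOf_eq, hψ,
        Equiv.Perm.coe_one, id_eq]
      constructor
      · rintro ⟨h1, h2⟩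
        refine ⟨h1, fun i => ?_⟩
        have := h2 (σ.symm i)
        rwa [Equiv.apply_symm_apply] at this
      · rintro ⟨h1, h2⟩
        exact ⟨h1, fun i => h2 (σ i)⟩
    rw [hpre] at hmap
    rw [hmap]
    refine lintegral_congr fun t => ?_
    simp_rw [hψ]
    exact (Equiv.prod_comp σ fun i => g' (t i)).symm
  -- disjointness
  have hdisj : Pairwise (Function.onFun Disjoint fun σ : Equiv.Perm (Fin k) =>
      simplexSet γ k σ) := by
    intro σ τ hne
    simp only [Function.onFun, Set.disjoint_left]
    rintro t ⟨hσ, hmem⟩ ⟨hτ, _⟩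
    apply hne
    have htinj : Function.Injective t := by
      have h1 : Function.Injective fun i => t (σ i) := hσ.injective
      have h2 : t = (fun i => t (σ i)) ∘ σ.symm := by
        funext j; simp
      rw [h2]
      exact h1.comp σ.symm.injective
    have hr : Set.range (fun i => t (σ i)) = Set.range (fun i => t (τ i)) := by
      have h1 : Set.range (fun i => t (σ i)) = Set.range t := σ.surjective.range_comp t
      have h2 : Set.range (fun i => t (τ i)) = Set.range t := τ.surjective.range_comp t
      rw [h1, h2]
    haveI : WellFoundedLT (Fin k) := inferInstance
    have heq : (fun i => t (σ i)) = fun i => t (τ i) :=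
      (StrictMono.range_inj (f := fun i => t (σ i)) (g := fun i => t (τ i)) hσ hτ).1 hr
    ext i
    exact congrArg Fin.val (htinj (congrFun heq i))
  -- sum over permutations
  have hunion := lintegral_iUnion (μ := (volume : Measure (Fin k → ℝ)))
    (fun σ : Equiv.Perm (Fin k) => measurableSet_simplexSet γ k σ) hdisj
    (fun t => ∏ i, g' (t i))
  have hsum : (k.factorial : ℝ≥0∞) * (∫⁻ t in simplexSet γ k 1, ∏ i, g' (t i))
      = ∑' σ : Equiv.Perm (Fin k), ∫⁻ t in simplexSet γ k σ, ∏ i, g' (t i) := by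
    rw [tsum_fintype, Finset.sum_congr rfl fun σ _ => hperm σ, Finset.sum_const,
      nsmul_eq_mul]
    congr 1
    simp [Finset.card_univ, Fintype.card_perm]
  calc (k.factorial : ℝ≥0∞) * (∫⁻ t in simplexSet γ k 1, ∏ i, g (t i))
      = (k.factorial : ℝ≥0∞) * (∫⁻ t in simplexSet γ k 1, ∏ i, g' (t i)) := by
        rw [hcong]
    _ = ∑' σ : Equiv.Perm (Fin k), ∫⁻ t in simplexSet γ k σ, ∏ i, g' (t i) := hsum
    _ = ∫⁻ t in (⋃ σ : Equiv.Perm (Fin k), simplexSet γ k σ), ∏ i, g' (t i) :=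
        hunion.symm
    _ ≤ ∫⁻ t : Fin k → ℝ, ∏ i, g' (t i) := setLIntegral_le_lintegral _ _
    _ = (∫⁻ y : ℝ, g' y) ^ k := by rw [hπ]; exact lintegral_pi_prod k g' hg'
    _ = (∫⁻ y in Set.Ioo 0 γ, g y) ^ k := by
        rw [hg'def]
        simp_rw [lintegral_indicator measurableSet_Ioo]

/-- Pointwise norm bound for the integrand on the simplex. -/
lemma pointwise_bound (γ : ℝ) (hγ : 0 ≤ γ) (q' : ℝ → ℂ) (l : ℂ) (n : ℕ)
    (t : Fin (2 * n) → ℝ) (ht1 : StrictMono t) (ht2 : ∀ i, t i ∈ Set.Ioo 0 γ) :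
    ‖∏ j : Fin n,
      q' (t ⟨2 * (j : ℕ), by have := j.isLt; omega⟩) *
        (starRingEnd ℂ) (q' (t ⟨2 * (j : ℕ) + 1, by have := j.isLt; omega⟩)) *
        Complex.exp (2 * Complex.I * l *
          (((t ⟨2 * (j : ℕ) + 1, by have := j.isLt; omega⟩) : ℝ)
            - (t ⟨2 * (j : ℕ), by have := j.isLt; omega⟩)))‖ ≤
      Real.exp (γ * (|l.im| - l.im)) * ∏ i : Fin (2 * n), ‖q' (t i)‖ := by
  have hlt1 : ∀ j : Fin n, 2 * (j : ℕ) < 2 * n := fun j => by have := j.isLt; omega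
  have hlt2 : ∀ j : Fin n, 2 * (j : ℕ) + 1 < 2 * n := fun j => by have := j.isLt; omega
  show ‖∏ j : Fin n,
      q' (t ⟨2 * (j : ℕ), hlt1 j⟩) *
        (starRingEnd ℂ) (q' (t ⟨2 * (j : ℕ) + 1, hlt2 j⟩)) *
        Complex.exp (2 * Complex.I * l *
          ((t ⟨2 * (j : ℕ) + 1, hlt2 j⟩ : ℂ) - (t ⟨2 * (j : ℕ), hlt1 j⟩ : ℂ)))‖ ≤
      Real.exp (γ * (|l.im| - l.im)) * ∏ i : Fin (2 * n), ‖q' (t i)‖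
  set a : Fin n → Fin (2 * n) := fun j => ⟨2 * (j : ℕ), hlt1 j⟩ with ha
  set b : Fin n → Fin (2 * n) := fun j => ⟨2 * (j : ℕ) + 1, hlt2 j⟩ with hb
  have hab : ∀ j : Fin n, a j < b j := fun j => by
    simp [ha, hb, Fin.mk_lt_mk]
  set D : ℝ := ∑ j : Fin n, (t (b j) - t (a j)) with hD
  have hD0 : 0 ≤ D := Finset.sum_nonneg fun j _ => sub_nonneg.2 (ht1 (hab j)).le
  have hDγ : D ≤ γ := by
    set fE : ℕ → ℝ := fun i => if h : i < 2 * n then t ⟨i, h⟩ else γ with hfE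
    have hfmono : Monotone fE := by
      intro i j hij
      by_cases hj : j < 2 * n
      · have hi : i < 2 * n := lt_of_le_of_lt hij hj
        simp only [hfE, dif_pos hi, dif_pos hj]
        exact ht1.monotone (by simpa [Fin.mk_le_mk] using hij)
      · by_cases hi : i < 2 * n
        · simp only [hfE, dif_pos hi, dif_neg hj]
          exact (ht2 _).2.le
        · simp [hfE, dif_neg hi, dif_neg hj]
    have h1 : D = ∑ j ∈ Finset.range n, (fE (2 * j + 1) - fE (2 * j)) := by
      rw [hD, ← Fin.sum_univ_eq_sum_range (fun j => fE (2 * j + 1) - fE (2 * j)) n]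
      refine Finset.sum_congr rfl fun j _ => ?_
      simp only [hfE, ha, hb, dif_pos (hlt1 j), dif_pos (hlt2 j)]
    have h2 : ∑ j ∈ Finset.range n, (fE (2 * j + 1) - fE (2 * j))
        ≤ ∑ j ∈ Finset.range n, (fE (2 * (j + 1)) - fE (2 * j)) :=
      Finset.sum_le_sum fun j _ => sub_le_sub_right (hfmono (by omega)) _
    have h3 : ∑ j ∈ Finset.range n, (fE (2 * (j + 1)) - fE (2 * j))
        = fE (2 * n) - fE 0 := Finset.sum_range_sub (fun j => fE (2 * j)) n
    have h4 : fE (2 * n) = γ := by simp [hfE]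
    have h5 : 0 ≤ fE 0 := by
      by_cases h : 0 < 2 * n
      · simp only [hfE, dif_pos h]
        exact (ht2 _).1.le
      · simp only [hfE, dif_neg h]
        exact hγ
    rw [h1]
    linarith [h2, h3, h4, h5]
  have hre : ∀ d e : ℝ, (2 * Complex.I * l * ((d : ℂ) - (e : ℂ))).re
      = -(2 * l.im * (d - e)) := by
    intro d e
    simp only [Complex.mul_re, Complex.mul_im, Complex.I_re, Complex.I_im,
      Complex.sub_re, Complex.sub_im, Complex.ofReal_re, Complex.ofReal_im,
      Complex.re_ofNat, Complex.im_ofNat]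
    ring
  have hfac : ∀ j : Fin n,
      ‖q' (t (a j)) * (starRingEnd ℂ) (q' (t (b j))) *
        Complex.exp (2 * Complex.I * l * ((t (b j) : ℂ) - (t (a j) : ℂ)))‖
      = ‖q' (t (a j))‖ * ‖q' (t (b j))‖
          * Real.exp (-(2 * l.im * (t (b j) - t (a j)))) := by
    intro j
    rw [norm_mul, norm_mul, RCLike.norm_conj,
      Complex.norm_exp, hre]
  rw [norm_prod, Finset.prod_congr rfl fun j _ => hfac j, Finset.prod_mul_distrib,
    ← Real.exp_sum]
  have hsumexp : ∑ j : Fin n, -(2 * l.im * (t (b j) - t (a j))) = -(2 * l.im * D) := by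
    rw [hD, Finset.mul_sum]
    simp
  rw [hsumexp]
  have hpair : (∏ j : Fin n, ‖q' (t (a j))‖ * ‖q' (t (b j))‖)
      = ∏ i : Fin (2 * n), ‖q' (t i)‖ := by
    set P : ℕ → ℝ := fun i => if h : i < 2 * n then ‖q' (t ⟨i, h⟩)‖ else 1 with hP
    have h1 : (∏ j : Fin n, ‖q' (t (a j))‖ * ‖q' (t (b j))‖)
        = ∏ j : Fin n, (P (2 * (j : ℕ)) * P (2 * (j : ℕ) + 1)) := by
      refine Finset.prod_congr rfl fun j _ => ?_
      simp only [hP, ha, hb, dif_pos (hlt1 j), dif_pos (hlt2 j)]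
    rw [h1, Fin.prod_univ_eq_prod_range (fun j => P (2 * j) * P (2 * j + 1)) n,
      ← prod_range_two_mul n P, ← Fin.prod_univ_eq_prod_range P (2 * n)]
    refine Finset.prod_congr rfl fun i _ => ?_
    simp only [hP]
    rw [dif_pos i.isLt]
  rw [hpair, mul_comm]
  have hprod0 : 0 ≤ ∏ i : Fin (2 * n), ‖q' (t i)‖ :=
    Finset.prod_nonneg fun i _ => norm_nonneg _
  have hexp_le : Real.exp (-(2 * l.im * D)) ≤ Real.exp (γ * (|l.im| - l.im)) := by
    apply Real.exp_le_exp.2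
    rcases abs_cases l.im with ⟨h1, h2⟩ | ⟨h1, h2⟩
    · nlinarith [mul_nonneg h2 hD0]
    · nlinarith [mul_le_mul_of_nonneg_left hDγ (by linarith : (0:ℝ) ≤ -l.im)]
  exact mul_le_mul hexp_le le_rfl hprod0 (Real.exp_pos _).le

/-- The main per-term bound. -/
lemma aCoeff_bound (γ : ℝ) (hγ : 0 ≤ γ) (q : ℝ → ℂ) (hq : Integrable q) (l : ℂ) (n : ℕ) :
    ‖aCoeff γ q n l‖ ≤ Real.exp (γ * (|l.im| - l.im)) *
      ((∫ x : ℝ, ‖q x‖) ^ (2 * n) / ((2 * n).factorial : ℝ)) := by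
  obtain ⟨q', hq'sm, hqq'⟩ : ∃ q' : ℝ → ℂ, StronglyMeasurable q' ∧ q =ᵐ[volume] q' :=
    ⟨hq.1.mk q, hq.1.stronglyMeasurable_mk, hq.1.ae_eq_mk⟩
  have hq'meas : Measurable q' := hq'sm.measurable
  have hq'int : Integrable q' := hq.congr hqq'
  have hQeq : (∫ x : ℝ, ‖q x‖) = ∫ x : ℝ, ‖q' x‖ :=
    integral_congr_ae (hqq'.fun_comp (fun z : ℂ => ‖z‖))
  have hA : aCoeff γ q n l = aCoeff γ q' n l := by
    simp only [aCoeff]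
    refine integral_congr_ae (ae_restrict_of_ae ?_)
    have hae : ∀ i : Fin (2 * n), ∀ᵐ t : Fin (2 * n) → ℝ, q (t i) = q' (t i) := by
      intro i
      have hnull : volume {x : ℝ | ¬ q x = q' x} = 0 := ae_iff.1 hqq'
      rw [ae_iff]
      have heq : {t : Fin (2 * n) → ℝ | ¬ q (t i) = q' (t i)}
          = Function.eval i ⁻¹' {x : ℝ | ¬ q x = q' x} := rfl
      rw [heq, volume_pi]
      exact Measure.pi_eval_preimage_null _ hnull
    filter_upwards [ae_all_iff.2 hae] with t ht
    exact Finset.prod_congr rfl fun j _ => by rw [ht, ht]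
  rw [hA, hQeq]
  set C := Real.exp (γ * (|l.im| - l.im)) with hC
  set Q := ∫ x : ℝ, ‖q' x‖ with hQ
  have hC0 : 0 ≤ C := (Real.exp_pos _).le
  have hQ0 : 0 ≤ Q := integral_nonneg fun x => norm_nonneg _
  have hSeq : {t : Fin (2 * n) → ℝ | StrictMono t ∧ ∀ i, t i ∈ Set.Ioo 0 γ}
      = simplexSet γ (2 * n) 1 := by
    ext t
    simp [simplexSet]
  simp only [aCoeff, hSeq]
  set g : ℝ → ℝ≥0∞ := fun y => (‖q' y‖₊ : ℝ≥0∞) with hg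
  have hgmeas : Measurable g := hq'meas.nnnorm.coe_nnreal_ennreal
  have hprodmeas : Measurable fun t : Fin (2 * n) → ℝ => ∏ i, g (t i) :=
    Finset.measurable_prod _ fun i _ => hgmeas.comp (measurable_pi_apply i)
  have hIoo : (∫⁻ y in Set.Ioo 0 γ, g y) ≤ ENNReal.ofReal Q := by
    calc (∫⁻ y in Set.Ioo 0 γ, g y) ≤ ∫⁻ y, g y := setLIntegral_le_lintegral _ _
      _ = ENNReal.ofReal (∫ y, ‖q' y‖) :=
          (ofReal_integral_norm_eq_lintegral_enorm hq'int).symm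
      _ = ENNReal.ofReal Q := by simp only [hQ]
  set Be : ℝ≥0∞ := ENNReal.ofReal C *
    ((ENNReal.ofReal Q) ^ (2 * n) / (((2 * n).factorial : ℕ) : ℝ≥0∞)) with hBe
  have hfin : Be ≠ ∞ := by
    refine ENNReal.mul_ne_top ENNReal.ofReal_ne_top ?_
    exact (ENNReal.div_lt_top (ENNReal.pow_ne_top ENNReal.ofReal_ne_top)
      (by exact_mod_cast Nat.factorial_ne_zero (2 * n))).ne
  refine le_trans (norm_integral_le_lintegral_norm _) (le_trans (ENNReal.toReal_mono hfin ?_) (le_of_eq ?_))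
  · -- lintegral bound
    calc ∫⁻ t in simplexSet γ (2 * n) 1, ENNReal.ofReal
          ‖∏ j : Fin n,
            q' (t ⟨2 * (j : ℕ), by have := j.isLt; omega⟩) *
              (starRingEnd ℂ) (q' (t ⟨2 * (j : ℕ) + 1, by have := j.isLt; omega⟩)) *
              Complex.exp (2 * Complex.I * l *
                (((t ⟨2 * (j : ℕ) + 1, by have := j.isLt; omega⟩) : ℝ)
                  - (t ⟨2 * (j : ℕ), by have := j.isLt; omega⟩)))‖
        ≤ ∫⁻ t in simplexSet γ (2 * n) 1, ENNReal.ofReal C * ∏ i, g (t i) := by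
          refine setLIntegral_mono (measurable_const.mul hprodmeas) ?_
          intro t ht
          have h1 := pointwise_bound γ hγ q' l n t
            (by simpa [simplexSet] using ht.1) ht.2
          refine le_trans (ENNReal.ofReal_le_ofReal h1) (le_of_eq ?_)
          rw [ENNReal.ofReal_mul hC0]
          congr 1
          rw [show (∏ i : Fin (2 * n), ‖q' (t i)‖) = ‖∏ i : Fin (2 * n), q' (t i)‖ from
              (norm_prod _ _).symm,
            ofReal_norm, enorm_eq_nnnorm, nnnorm_prod, ENNReal.coe_finset_prod]
      _ = ENNReal.ofReal C * ∫⁻ t in simplexSet γ (2 * n) 1, ∏ i, g (t i) :=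
          lintegral_const_mul _ hprodmeas
      _ ≤ Be := by
          rw [hBe]
          refine mul_le_mul_right ?_ _
          have h1 := factorial_mul_lintegral_simplex_le γ (2 * n) g hgmeas
          have h2 : (∫⁻ t in simplexSet γ (2 * n) 1, ∏ i, g (t i))
              ≤ (∫⁻ y in Set.Ioo 0 γ, g y) ^ (2 * n) / (((2 * n).factorial : ℕ) : ℝ≥0∞) := by
            rw [ENNReal.le_div_iff_mul_le
              (Or.inl (by exact_mod_cast Nat.factorial_ne_zero (2 * n)))
              (Or.inl (ENNReal.natCast_ne_top _))]
            rwa [mul_comm]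
          refine le_trans h2 ?_
          gcongr
  · -- toReal computation
    rw [hBe, ENNReal.toReal_mul, ENNReal.toReal_div, ENNReal.toReal_pow,
      ENNReal.toReal_ofReal hC0, ENNReal.toReal_ofReal hQ0, ENNReal.toReal_natCast _]

end DiracAux

/-- Bound on `a − 1`: `|a(λ) − 1| ≤ exp(γ(|ε| − ε))·(cosh(‖q‖₁) − 1)` where `ε = Im λ`. -/
theorem diracA_sub_one_bound (γ : ℝ) (hγ : 0 < γ) (q : ℝ → ℂ)
    (hq : Integrable q) (hsupp : Function.support q ⊆ Set.Icc 0 γ) (l : ℂ) :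
    ‖diracA γ q l - 1‖ ≤
      Real.exp (γ * (|l.im| - l.im)) * (Real.cosh (∫ x : ℝ, ‖q x‖) - 1) := by
  set Q := ∫ x : ℝ, ‖q x‖ with hQdef
  set C := Real.exp (γ * (|l.im| - l.im)) with hCdef
  have hb : ∀ m : ℕ, ‖aCoeff γ q (m + 1) l‖ ≤
      C * (Q ^ (2 * (m + 1)) / ((2 * (m + 1)).factorial : ℝ)) :=
    fun m => DiracAux.aCoeff_bound γ hγ.le q hq l (m + 1)
  have hcosh := Real.hasSum_cosh Q
  have hshift : HasSum (fun m : ℕ => Q ^ (2 * (m + 1)) / ((2 * (m + 1)).factorial : ℝ))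
      (Real.cosh Q - 1) := by
    have h : HasSum (fun m : ℕ => Q ^ (2 * (m + 1)) / ((2 * (m + 1)).factorial : ℝ))
        (Real.cosh Q - 1) ↔
        HasSum (fun k : ℕ => Q ^ (2 * k) / ((2 * k).factorial : ℝ))
          ((Real.cosh Q - 1) + ∑ i ∈ Finset.range 1, Q ^ (2 * i) / ((2 * i).factorial : ℝ)) :=
      hasSum_nat_add_iff (f := fun k : ℕ => Q ^ (2 * k) / ((2 * k).factorial : ℝ)) 1
    refine h.2 ?_
    simp only [Finset.range_one, Finset.sum_singleton]
    have h0 : Q ^ (2 * 0) / ((2 * 0).factorial : ℝ) = 1 := by norm_num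
    rw [h0]
    simpa using hcosh
  have hCsum : HasSum (fun m : ℕ => C * (Q ^ (2 * (m + 1)) / ((2 * (m + 1)).factorial : ℝ)))
      (C * (Real.cosh Q - 1)) := hshift.mul_left C
  have hfinal := tsum_of_norm_bounded hCsum hb
  have hdiff : diracA γ q l - 1 = ∑' m : ℕ, aCoeff γ q (m + 1) l := by
    rw [diracA]; ring
  rw [hdiff]
  exact hfinal
end

section
/- Let γ > 0 and let q ∈ L¹(ℝ;ℂ) with supp q ⊆ [0,γ]. Define the iterates χ₀(x,λ) = 1 and χ_n(x,λ) = ∫_x^γ q(t₁) (∫_{t₁}^γ exp(2iλ(t₂ − t₁))·conj(q(t₂))·χ_{n−1}(t₂,λ) dt₂) dt₁ for n ≥ 1. Then for every λ ∈ ℂ the series χ(x,λ) = 1 + Σ_{n≥1} χ_n(x,λ) converges for all x ∈ ℝ, and the resulting function χ satisfies the integral equation χ(x,λ) = 1 + ∫_x^γ q(t₁) (∫_{t₁}^γ exp(2iλ(t₂ − t₁))·conj(q(t₂))·χ(t₂,λ) dt₂) dt₁ for all x ∈ ℝ. -/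
open MeasureTheory Complex Real

/-- The iterates `χ_n`: `χ₀(x,λ) = 1` and
`χ_n(x,λ) = ∫_x^γ q(t₁) (∫_{t₁}^γ exp(2iλ(t₂−t₁))·conj(q(t₂))·χ_{n−1}(t₂,λ) dt₂) dt₁`. -/
noncomputable def chi (γ : ℝ) (q : ℝ → ℂ) : ℕ → ℝ → ℂ → ℂ
  | 0 => fun _ _ => 1
  | n + 1 => fun x l =>
      ∫ t₁ in x..γ, q t₁ *
        ∫ t₂ in t₁..γ,
          Complex.exp (2 * Complex.I * l * ((t₂ : ℝ) - t₁)) * (starRingEnd ℂ) (q t₂) *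
            chi γ q n t₂ l

namespace ChiAux

variable {γ : ℝ} {q : ℝ → ℂ}

noncomputable def Fq (γ : ℝ) (q : ℝ → ℂ) (x : ℝ) : ℝ := ∫ t in x..γ, ‖q t‖

lemma hq_zero (hsupp : Function.support q ⊆ Set.Icc 0 γ) {t : ℝ}
    (ht : t ∉ Set.Icc 0 γ) : q t = 0 := by
  by_contra h
  exact ht (hsupp (Function.mem_support.mpr h))

lemma Fq_eq (hsupp : Function.support q ⊆ Set.Icc 0 γ) (x : ℝ) :
    Fq γ q x = ∫ t in Set.Ioc x γ, ‖q t‖ := by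
  rcases le_or_gt x γ with h | h
  · exact intervalIntegral.integral_of_le h
  · have h1 : (∫ t in Set.Ioc γ x, ‖q t‖) = 0 := by
      rw [integral_Ioc_eq_integral_Ioo]
      refine setIntegral_eq_zero_of_forall_eq_zero fun t ht => ?_
      rw [hq_zero hsupp (fun hmem => absurd hmem.2 (not_le.mpr ht.1)), norm_zero]
    have h2 : Set.Ioc x γ = ∅ := Set.Ioc_eq_empty (not_lt.mpr h.le)
    rw [Fq, intervalIntegral.integral_symm, intervalIntegral.integral_of_le h.le, h1, h2]
    simp

lemma Fq_nonneg (hsupp : Function.support q ⊆ Set.Icc 0 γ) (x : ℝ) :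
    0 ≤ Fq γ q x := by
  rw [Fq_eq hsupp]
  exact setIntegral_nonneg measurableSet_Ioc fun t _ => norm_nonneg _

lemma Fq_anti (hq : Integrable q) (hsupp : Function.support q ⊆ Set.Icc 0 γ) :
    Antitone (Fq γ q) := by
  intro a b hab
  rw [Fq_eq hsupp, Fq_eq hsupp]
  exact setIntegral_mono_set hq.norm.integrableOn
    (Filter.Eventually.of_forall fun t => norm_nonneg _)
    (Set.Ioc_subset_Ioc_left hab).eventuallyLE

lemma Fq_sub (hq : Integrable q) (x y : ℝ) :
    (∫ t in x..y, ‖q t‖) = Fq γ q x - Fq γ q y := by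
  have h := intervalIntegral.integral_add_adjacent_intervals (a := x) (b := y) (c := γ)
    hq.norm.intervalIntegrable hq.norm.intervalIntegrable
  rw [Fq, Fq]
  linarith

lemma Fq_le (hq : Integrable q) (hsupp : Function.support q ⊆ Set.Icc 0 γ) (x : ℝ) :
    Fq γ q x ≤ Fq γ q 0 := by
  rcases le_or_gt 0 x with h | h
  · exact Fq_anti hq hsupp h
  · have h1 : (∫ t in x..0, ‖q t‖) = 0 := by
      rw [intervalIntegral.integral_of_le h.le, integral_Ioc_eq_integral_Ioo]
      refine setIntegral_eq_zero_of_forall_eq_zero fun t ht => ?_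
      rw [hq_zero hsupp (fun hmem => absurd hmem.1 (not_le.mpr ht.2)), norm_zero]
    have h2 := Fq_sub (γ := γ) hq x 0
    rw [h1] at h2
    linarith

lemma Fq_cont (hq : Integrable q) : Continuous (Fq γ q) := by
  have hii : ∀ a b : ℝ, IntervalIntegrable (fun t => ‖q t‖) volume a b := fun a b =>
    hq.norm.intervalIntegrable
  have h := intervalIntegral.continuous_primitive hii γ
  have heq : Fq γ q = fun x => -∫ t in γ..x, ‖q t‖ := by
    funext x
    rw [Fq, intervalIntegral.integral_symm]
  rw [heq]
  exact h.neg

lemma key (hq : Integrable q) (hsupp : Function.support q ⊆ Set.Icc 0 γ)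
    (k : ℕ) (x : ℝ) :
    (∫ t in Set.Ioc x γ, ‖q t‖ * Fq γ q t ^ k) ≤ Fq γ q x ^ (k + 1) / (k + 1) := by
  rcases k with _ | m
  · simp only [pow_zero, mul_one, pow_one, Nat.cast_zero, zero_add, div_one]
    rw [← Fq_eq hsupp]
  · set F := Fq γ q with hF
    have Fcont : Continuous F := Fq_cont hq
    have Fnn : ∀ t, 0 ≤ F t := Fq_nonneg hsupp
    set c := F x with hc
    have hc0 : 0 ≤ c := Fnn x
    have hm1 : ((m : ℝ) + 1) ≠ 0 := by positivity
    have hm2 : ((m : ℝ) + 2) ≠ 0 := by positivity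
    set w : ℝ → ENNReal := fun t => ENNReal.ofReal ‖q t‖ with hw
    have hwmeas : AEMeasurable w (volume.restrict (Set.Ioc x γ)) :=
      (ENNReal.measurable_ofReal.comp_aemeasurable hq.1.norm.aemeasurable).restrict
    set μ : Measure ℝ := (volume.restrict (Set.Ioc x γ)).withDensity w with hμ
    have lhs_eq : (∫ t in Set.Ioc x γ, ‖q t‖ * F t ^ (m + 1)) =
        (∫⁻ t, ENNReal.ofReal (F t ^ (m + 1)) ∂μ).toReal := by
      rw [integral_eq_lintegral_of_nonneg_ae
        (Filter.Eventually.of_forall fun t => mul_nonneg (norm_nonneg _) (pow_nonneg (Fnn t) _))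
        (hq.1.norm.restrict.mul ((Fcont.pow (m+1)).aestronglyMeasurable.restrict))]
      congr 1
      rw [hμ, lintegral_withDensity_eq_lintegral_mul₀ hwmeas
        ((Fcont.measurable.pow_const (m+1)).ennreal_ofReal.aemeasurable)]
      refine lintegral_congr fun t => ?_
      simp only [hw, Pi.mul_apply]
      rw [← ENNReal.ofReal_mul (norm_nonneg _)]
    have hpow : ∀ cw : ℝ, (∫ t in (0:ℝ)..cw, ((m:ℝ)+1) * t ^ m) = cw ^ (m+1) := by
      intro cw
      rw [intervalIntegral.integral_const_mul, integral_pow]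
      push_cast
      field_simp
      simp
    have layer := lintegral_comp_eq_lintegral_meas_le_mul μ
      (Filter.Eventually.of_forall Fnn) Fcont.aemeasurable
      (g := fun t => ((m:ℝ)+1) * t ^ m)
      (fun t _ => ((continuous_const.mul (continuous_pow m)).intervalIntegrable _ _))
      ((ae_restrict_iff' measurableSet_Ioi).2 (Filter.Eventually.of_forall fun t ht =>
        mul_nonneg (by positivity) (pow_nonneg (le_of_lt ht) m)))
    have hμS : ∀ t : ℝ, 0 < t → μ {a | t ≤ F a} ≤ ENNReal.ofReal (c - t) := by
      intro t ht
      have hclosed : IsClosed {a | t ≤ F a} := isClosed_le continuous_const Fcont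
      have hSm : MeasurableSet {a | t ≤ F a} := hclosed.measurableSet
      rw [hμ, withDensity_apply _ hSm, Measure.restrict_restrict hSm]
      set S := {a | t ≤ F a} ∩ Set.Ioc x γ with hS
      rcases S.eq_empty_or_nonempty with hSe | hSne
      · rw [hSe]
        simp
      · set τ := sSup S with hτ
        have hsub0 : S ⊆ Set.Ioc x γ := Set.inter_subset_right
        have hbdd : BddAbove S := BddAbove.mono hsub0 bddAbove_Ioc
        have hxτ : x ≤ τ := by
          obtain ⟨a, ha⟩ := hSne
          exact le_trans (hsub0 ha).1.le (le_csSup hbdd ha)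
        have hFτ : t ≤ F τ := by
          have h1 : τ ∈ closure S := csSup_mem_closure hSne hbdd
          have h2 : closure S ⊆ {a | t ≤ F a} :=
            closure_minimal Set.inter_subset_left hclosed
          exact h2 h1
        have hsub : S ⊆ Set.Ioc x τ := fun a ha => ⟨(hsub0 ha).1, le_csSup hbdd ha⟩
        calc (∫⁻ a in S, w a) ≤ ∫⁻ a in Set.Ioc x τ, w a := lintegral_mono_set hsub
          _ = ENNReal.ofReal (∫ a in Set.Ioc x τ, ‖q a‖) :=
              (ofReal_integral_eq_lintegral_ofReal hq.norm.integrableOn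
                ((ae_restrict_iff' measurableSet_Ioc).2
                  (Filter.Eventually.of_forall fun a _ => norm_nonneg _))).symm
          _ = ENNReal.ofReal (F x - F τ) := by
              rw [← intervalIntegral.integral_of_le hxτ, Fq_sub hq]
          _ ≤ ENNReal.ofReal (c - t) :=
              ENNReal.ofReal_le_ofReal (sub_le_sub_left hFτ _)
    have rhs_le : (∫⁻ t in Set.Ioi (0:ℝ), μ {a | t ≤ F a} * ENNReal.ofReal (((m:ℝ)+1) * t ^ m)) ≤
        ENNReal.ofReal (c ^ (m+2) / ((m:ℝ)+2)) := by
      have step1 : (∫⁻ t in Set.Ioi (0:ℝ), μ {a | t ≤ F a} * ENNReal.ofReal (((m:ℝ)+1) * t ^ m)) ≤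
          ∫⁻ t in Set.Ioi (0:ℝ), ENNReal.ofReal (c - t) * ENNReal.ofReal (((m:ℝ)+1) * t ^ m) := by
        refine lintegral_mono_ae ((ae_restrict_iff' measurableSet_Ioi).2
          (Filter.Eventually.of_forall fun t ht => ?_))
        exact mul_le_mul_left (hμS t ht) _
      refine step1.trans ?_
      rw [← Set.Ioc_union_Ioi_eq_Ioi hc0, lintegral_union measurableSet_Ioi
        (Set.Ioc_disjoint_Ioi le_rfl)]
      have h2 : (∫⁻ t in Set.Ioi c, ENNReal.ofReal (c - t) * ENNReal.ofReal (((m:ℝ)+1) * t ^ m)) =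
          0 := by
        rw [setLIntegral_congr_fun measurableSet_Ioi
          (fun t ht => ?_), lintegral_zero]
        rw [ENNReal.ofReal_eq_zero.mpr (by simp only [Set.mem_Ioi] at ht; linarith), zero_mul]
      have h1 : (∫⁻ t in Set.Ioc 0 c, ENNReal.ofReal (c - t) * ENNReal.ofReal (((m:ℝ)+1) * t ^ m)) =
          ENNReal.ofReal (∫ t in Set.Ioc 0 c, (c - t) * (((m:ℝ)+1) * t ^ m)) := by
        have hInt : IntegrableOn (fun t : ℝ => (c - t) * (((m:ℝ)+1) * t ^ m))
            (Set.Ioc 0 c) := ((continuous_const.sub continuous_id').mul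
            (continuous_const.mul (continuous_pow m))).integrableOn_Ioc
        have hnn : 0 ≤ᵐ[volume.restrict (Set.Ioc 0 c)]
            fun t : ℝ => (c - t) * (((m:ℝ)+1) * t ^ m) :=
          (ae_restrict_iff' measurableSet_Ioc).2 (Filter.Eventually.of_forall fun t ht =>
            mul_nonneg (by linarith [ht.2]) (mul_nonneg (by positivity)
              (pow_nonneg ht.1.le m)))
        rw [ofReal_integral_eq_lintegral_ofReal hInt hnn]
        refine setLIntegral_congr_fun measurableSet_Ioc
          (fun t ht => ?_)
        exact (ENNReal.ofReal_mul (by linarith [ht.2] : (0:ℝ) ≤ c - t)).symm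
      have hval : (∫ t in Set.Ioc 0 c, (c - t) * (((m:ℝ)+1) * t ^ m)) =
          c ^ (m+2) / ((m:ℝ)+2) := by
        rw [← intervalIntegral.integral_of_le hc0]
        rw [intervalIntegral.integral_congr (g := fun t =>
          ((m:ℝ)+1) * c * t ^ m - ((m:ℝ)+1) * t ^ (m+1)) (fun t _ => by ring)]
        rw [intervalIntegral.integral_sub (f := fun t => ((m:ℝ)+1) * c * t ^ m)
          (g := fun t => ((m:ℝ)+1) * t ^ (m+1))
          ((continuous_const.mul (continuous_pow m)).intervalIntegrable _ _)
          ((continuous_const.mul (continuous_pow (m+1))).intervalIntegrable _ _),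
          intervalIntegral.integral_const_mul, intervalIntegral.integral_const_mul,
          integral_pow, integral_pow]
        push_cast
        field_simp
        ring
      rw [h1, h2, hval, add_zero]
    rw [lhs_eq]
    have chain : (∫⁻ t, ENNReal.ofReal (F t ^ (m+1)) ∂μ) ≤
        ENNReal.ofReal (c ^ (m+2) / ((m:ℝ)+2)) := by
      calc (∫⁻ t, ENNReal.ofReal (F t ^ (m+1)) ∂μ)
          = ∫⁻ ω, ENNReal.ofReal (∫ t in (0:ℝ)..F ω, ((m:ℝ)+1) * t ^ m) ∂μ :=
            lintegral_congr fun ω => by rw [hpow]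
        _ = ∫⁻ t in Set.Ioi (0:ℝ), μ {a | t ≤ F a} * ENNReal.ofReal (((m:ℝ)+1) * t ^ m) := layer
        _ ≤ ENNReal.ofReal (c ^ (m+2) / ((m:ℝ)+2)) := rhs_le
    calc (∫⁻ t, ENNReal.ofReal (F t ^ (m+1)) ∂μ).toReal
        ≤ (ENNReal.ofReal (c ^ (m+2) / ((m:ℝ)+2))).toReal :=
          ENNReal.toReal_mono ENNReal.ofReal_ne_top chain
      _ = c ^ (m+2) / ((m:ℝ)+2) := ENNReal.toReal_ofReal (by positivity)
      _ = F x ^ (m + 1 + 1) / (↑(m+1) + 1) := by rw [hc]; push_cast; ring_nf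


noncomputable def EB (γ : ℝ) (l : ℂ) : ℝ := Real.exp (2 * ‖l‖ * γ)

lemma EB_pos (γ : ℝ) (l : ℂ) : 0 < EB γ l := Real.exp_pos _

lemma one_le_EB {γ : ℝ} (hγ : 0 < γ) (l : ℂ) : 1 ≤ EB γ l :=
  Real.one_le_exp (by positivity)

lemma expBound {γ : ℝ} (l : ℂ) {s : ℝ} (hs : |s| ≤ γ) :
    ‖Complex.exp (2 * Complex.I * l * (s : ℂ))‖ ≤ EB γ l := by
  rw [Complex.norm_exp]
  apply Real.exp_le_exp.2
  calc (2 * Complex.I * l * (s : ℂ)).re ≤ ‖2 * Complex.I * l * (s : ℂ)‖ :=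
        Complex.re_le_norm _
    _ = 2 * ‖l‖ * |s| := by
        rw [norm_mul, norm_mul, norm_mul, Complex.norm_I, Complex.norm_real,
          Real.norm_eq_abs, Complex.norm_two]
        ring
    _ ≤ 2 * ‖l‖ * γ := by
        have h0 : (0:ℝ) ≤ 2 * ‖l‖ := by positivity
        exact mul_le_mul_of_nonneg_left hs h0

lemma expBound' {γ : ℝ} (l : ℂ) {a b : ℝ} (h : |b - a| ≤ γ) :
    ‖Complex.exp (2 * Complex.I * l * ((b : ℂ) - (a : ℂ)))‖ ≤ EB γ l := by
  have hc : ((b : ℂ) - (a : ℂ)) = ((b - a : ℝ) : ℂ) := by push_cast; ring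
  rw [hc]
  exact expBound l h

/-- inner auxiliary function -/
noncomputable def PSI (γ : ℝ) (q : ℝ → ℂ) (l : ℂ) (n : ℕ) (t : ℝ) : ℂ :=
  Complex.exp (2 * Complex.I * l * (t : ℂ)) * (starRingEnd ℂ) (q t) * chi γ q n t l

/-- the inner integral -/
noncomputable def IN (γ : ℝ) (q : ℝ → ℂ) (l : ℂ) (n : ℕ) (t₁ : ℝ) : ℂ :=
  ∫ t₂ in t₁..γ,
    Complex.exp (2 * Complex.I * l * ((t₂ : ℝ) - t₁)) * (starRingEnd ℂ) (q t₂) * chi γ q n t₂ l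

lemma chi_succ (γ : ℝ) (q : ℝ → ℂ) (l : ℂ) (n : ℕ) (x : ℝ) :
    chi γ q (n + 1) x l = ∫ t₁ in x..γ, q t₁ * IN γ q l n t₁ := rfl

lemma integrand_eq (γ : ℝ) (q : ℝ → ℂ) (l : ℂ) (n : ℕ) (t₁ t₂ : ℝ) :
    Complex.exp (2 * Complex.I * l * ((t₂ : ℝ) - t₁)) * (starRingEnd ℂ) (q t₂) *
        chi γ q n t₂ l =
      Complex.exp (-(2 * Complex.I * l * (t₁ : ℂ))) * PSI γ q l n t₂ := by
  rw [PSI, show 2 * Complex.I * l * ((t₂ : ℂ) - (t₁ : ℂ)) =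
    -(2 * Complex.I * l * (t₁ : ℂ)) + 2 * Complex.I * l * (t₂ : ℂ) by ring,
    Complex.exp_add]
  ring

variable {γ : ℝ} {q : ℝ → ℂ} {l : ℂ}

lemma G_int (hq : Integrable q) (hsupp : Function.support q ⊆ Set.Icc 0 γ) (m : ℕ) :
    Integrable (fun t => ‖q t‖ * Fq γ q t ^ m) := by
  refine Integrable.mono' (hq.norm.const_mul (Fq γ q 0 ^ m))
    (hq.1.norm.mul (((Fq_cont hq).pow m).aestronglyMeasurable)) ?_
  refine Filter.Eventually.of_forall fun t => ?_
  rw [Real.norm_eq_abs, _root_.abs_of_nonneg (mul_nonneg (norm_nonneg _)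
    (pow_nonneg (Fq_nonneg hsupp t) m)), mul_comm (Fq γ q 0 ^ m) ‖q t‖]
  exact mul_le_mul_of_nonneg_left
    (pow_le_pow_left₀ (Fq_nonneg hsupp t) (Fq_le hq hsupp t) m) (norm_nonneg _)

lemma chi_cont_bound (hγ : 0 < γ) (hq : Integrable q)
    (hsupp : Function.support q ⊆ Set.Icc 0 γ) (l : ℂ) (n : ℕ) :
    Continuous (fun x => chi γ q n x l) ∧
      ∀ x, ‖chi γ q n x l‖ ≤ EB γ l ^ n * Fq γ q x ^ (2 * n) / ((2 * n).factorial : ℝ) := by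
  induction n with
  | zero =>
    constructor
    · show Continuous fun _ : ℝ => (1 : ℂ)
      exact continuous_const
    · intro x
      show ‖(1:ℂ)‖ ≤ _
      simp [Nat.factorial]
  | succ n ih =>
    obtain ⟨ihc, ihb⟩ := ih
    have hE0 : (0:ℝ) < EB γ l := EB_pos γ l
    have hFnn : ∀ t, 0 ≤ Fq γ q t := Fq_nonneg hsupp
    have hF0 : ∀ t, Fq γ q t ≤ Fq γ q 0 := Fq_le hq hsupp
    -- integrability of PSI
    have psi_meas : AEStronglyMeasurable (PSI γ q l n) volume := by
      refine (((Complex.continuous_exp.comp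
        (continuous_const.mul Complex.continuous_ofReal)).aestronglyMeasurable.mul
        (Complex.continuous_conj.comp_aestronglyMeasurable hq.1)).mul
        ihc.aestronglyMeasurable)
    have chi_le : ∀ t, ‖chi γ q n t l‖ ≤
        EB γ l ^ n * Fq γ q 0 ^ (2 * n) / ((2 * n).factorial : ℝ) := by
      intro t
      refine (ihb t).trans ?_
      have h1 : Fq γ q t ^ (2 * n) ≤ Fq γ q 0 ^ (2 * n) :=
        pow_le_pow_left₀ (hFnn t) (hF0 t) _
      have h3 : (0:ℝ) ≤ EB γ l ^ n := le_of_lt (pow_pos hE0 n)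
      gcongr
    -- PSI is integrable
    have psi_bound : ∀ t, ‖PSI γ q l n t‖ ≤
        (EB γ l * (EB γ l ^ n * Fq γ q 0 ^ (2 * n) / ((2 * n).factorial : ℝ))) * ‖q t‖ := by
      intro t
      by_cases hqt : q t = 0
      · simp [PSI, hqt]
      · have htm : t ∈ Set.Icc 0 γ := hsupp (Function.mem_support.mpr hqt)
        have hexp : ‖Complex.exp (2 * Complex.I * l * (t : ℂ))‖ ≤ EB γ l :=
          expBound l (by rw [_root_.abs_of_nonneg htm.1]; exact htm.2)
        rw [PSI, norm_mul, norm_mul, RCLike.norm_conj]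
        calc ‖Complex.exp (2 * Complex.I * l * (t:ℂ))‖ * ‖q t‖ * ‖chi γ q n t l‖
            ≤ EB γ l * ‖q t‖ * (EB γ l ^ n * Fq γ q 0 ^ (2 * n) / ((2 * n).factorial : ℝ)) :=
              mul_le_mul (mul_le_mul hexp le_rfl (norm_nonneg _) hE0.le) (chi_le t)
                (norm_nonneg _) (mul_nonneg hE0.le (norm_nonneg _))
          _ = (EB γ l * (EB γ l ^ n * Fq γ q 0 ^ (2 * n) / ((2 * n).factorial : ℝ))) * ‖q t‖ := by
              ring
    have psi_int : Integrable (PSI γ q l n) :=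
      Integrable.mono' (hq.norm.const_mul _) psi_meas
        (Filter.Eventually.of_forall psi_bound)
    -- IN is continuous
    have IN_int_form : ∀ t₁ : ℝ, IN γ q l n t₁ =
        Complex.exp (-(2 * Complex.I * l * (t₁ : ℂ))) * ∫ t₂ in t₁..γ, PSI γ q l n t₂ := by
      intro t₁
      rw [IN, intervalIntegral.integral_congr
        (g := fun t₂ => Complex.exp (-(2 * Complex.I * l * (t₁ : ℂ))) * PSI γ q l n t₂)
        (fun t₂ _ => integrand_eq γ q l n t₁ t₂)]
      exact intervalIntegral.integral_const_mul _ _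
    have IN_cont : Continuous (IN γ q l n) := by
      have h1 : Continuous fun t₁ : ℝ => ∫ t₂ in t₁..γ, PSI γ q l n t₂ := by
        have h2 := (intervalIntegral.continuous_primitive
          (fun a b => psi_int.intervalIntegrable) γ).neg
        refine h2.congr fun t₁ => ?_
        rw [Pi.neg_apply, ← intervalIntegral.integral_symm]
      have heq : IN γ q l n = fun t₁ : ℝ =>
          Complex.exp (-(2 * Complex.I * l * (t₁ : ℂ))) * ∫ t₂ in t₁..γ, PSI γ q l n t₂ :=
        funext IN_int_form
      rw [heq]
      exact (Complex.continuous_exp.comp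
        (continuous_const.mul Complex.continuous_ofReal).neg).mul h1
    -- bound on IN for t₁ ∈ [0, γ]
    have IN_bound : ∀ t₁ ∈ Set.Icc (0:ℝ) γ, ‖IN γ q l n t₁‖ ≤
        EB γ l ^ (n+1) * Fq γ q t₁ ^ (2*n+1) / ((2*n+1).factorial : ℝ) := by
      intro t₁ ht₁
      have hIN_int : Integrable (fun t₂ =>
          Complex.exp (2 * Complex.I * l * ((t₂ : ℝ) - t₁)) * (starRingEnd ℂ) (q t₂) *
            chi γ q n t₂ l) :=
        (psi_int.const_mul (Complex.exp (-(2 * Complex.I * l * (t₁ : ℂ))))).congr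
          (Filter.Eventually.of_forall fun t₂ => (integrand_eq γ q l n t₁ t₂).symm)
      have hcoef : (0:ℝ) ≤ EB γ l ^ (n+1) / ((2*n).factorial : ℝ) := by
        have := pow_pos hE0 (n+1); positivity
      rw [IN, intervalIntegral.integral_of_le ht₁.2]
      calc ‖∫ t₂ in Set.Ioc t₁ γ, Complex.exp (2 * Complex.I * l * ((t₂ : ℝ) - t₁)) *
              (starRingEnd ℂ) (q t₂) * chi γ q n t₂ l‖
          ≤ ∫ t₂ in Set.Ioc t₁ γ, ‖Complex.exp (2 * Complex.I * l * ((t₂ : ℝ) - t₁)) *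
              (starRingEnd ℂ) (q t₂) * chi γ q n t₂ l‖ := norm_integral_le_integral_norm _
        _ ≤ ∫ t₂ in Set.Ioc t₁ γ, (EB γ l ^ (n+1) / ((2*n).factorial : ℝ)) *
              (‖q t₂‖ * Fq γ q t₂ ^ (2*n)) := by
            refine setIntegral_mono_on hIN_int.norm.integrableOn
              (((G_int hq hsupp (2*n)).const_mul _).integrableOn) measurableSet_Ioc
              fun t₂ ht₂ => ?_
            rw [norm_mul, norm_mul, RCLike.norm_conj]
            have hexp : ‖Complex.exp (2 * Complex.I * l * ((t₂ : ℂ) - (t₁ : ℂ)))‖ ≤ EB γ l := by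
              refine expBound' l ?_
              rw [_root_.abs_of_nonneg (by linarith [ht₂.1] : (0:ℝ) ≤ t₂ - t₁)]
              have := ht₁.1; have := ht₂.2; linarith
            calc ‖Complex.exp (2 * Complex.I * l * ((t₂ : ℂ) - (t₁ : ℂ)))‖ * ‖q t₂‖ *
                  ‖chi γ q n t₂ l‖
                ≤ EB γ l * ‖q t₂‖ * (EB γ l ^ n * Fq γ q t₂ ^ (2 * n) /
                    ((2 * n).factorial : ℝ)) :=
                  mul_le_mul (mul_le_mul hexp le_rfl (norm_nonneg _) hE0.le) (ihb t₂)
                    (norm_nonneg _) (mul_nonneg hE0.le (norm_nonneg _))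
              _ = (EB γ l ^ (n+1) / ((2*n).factorial : ℝ)) * (‖q t₂‖ * Fq γ q t₂ ^ (2*n)) := by
                  ring
        _ = (EB γ l ^ (n+1) / ((2*n).factorial : ℝ)) *
              ∫ t₂ in Set.Ioc t₁ γ, ‖q t₂‖ * Fq γ q t₂ ^ (2*n) := by
            rw [integral_const_mul]
        _ ≤ (EB γ l ^ (n+1) / ((2*n).factorial : ℝ)) *
              (Fq γ q t₁ ^ (2*n+1) / ((2*n : ℕ) + 1 : ℝ)) := by
            refine mul_le_mul_of_nonneg_left ?_ hcoef
            exact key hq hsupp (2*n) t₁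
        _ = EB γ l ^ (n+1) * Fq γ q t₁ ^ (2*n+1) / ((2*n+1).factorial : ℝ) := by
            rw [show (2*n+1).factorial = (2*n+1) * (2*n).factorial from Nat.factorial_succ _,
              div_mul_div_comm]
            push_cast
            ring
    -- the outer integrand
    have h_meas : AEStronglyMeasurable (fun t₁ => q t₁ * IN γ q l n t₁) volume :=
      hq.1.mul IN_cont.aestronglyMeasurable
    have h_bound_loc : ∀ t₁, ‖q t₁ * IN γ q l n t₁‖ ≤
        (EB γ l ^ (n+1) / ((2*n+1).factorial : ℝ)) * (‖q t₁‖ * Fq γ q t₁ ^ (2*n+1)) := by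
      intro t₁
      by_cases hqt : q t₁ = 0
      · simp [hqt]
      · have htm : t₁ ∈ Set.Icc 0 γ := hsupp (Function.mem_support.mpr hqt)
        rw [norm_mul]
        calc ‖q t₁‖ * ‖IN γ q l n t₁‖
            ≤ ‖q t₁‖ * (EB γ l ^ (n+1) * Fq γ q t₁ ^ (2*n+1) / ((2*n+1).factorial : ℝ)) :=
              mul_le_mul_of_nonneg_left (IN_bound t₁ htm) (norm_nonneg _)
          _ = (EB γ l ^ (n+1) / ((2*n+1).factorial : ℝ)) * (‖q t₁‖ * Fq γ q t₁ ^ (2*n+1)) := by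
              ring
    have h_bound_glob : ∀ t₁, ‖q t₁ * IN γ q l n t₁‖ ≤
        (EB γ l ^ (n+1) / ((2*n+1).factorial : ℝ) * Fq γ q 0 ^ (2*n+1)) * ‖q t₁‖ := by
      intro t₁
      refine (h_bound_loc t₁).trans ?_
      have h1 : Fq γ q t₁ ^ (2*n+1) ≤ Fq γ q 0 ^ (2*n+1) :=
        pow_le_pow_left₀ (hFnn t₁) (hF0 t₁) _
      have h2 : (0:ℝ) ≤ EB γ l ^ (n+1) / ((2*n+1).factorial : ℝ) := by
        have := pow_pos hE0 (n+1); positivity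
      calc (EB γ l ^ (n+1) / ((2*n+1).factorial : ℝ)) * (‖q t₁‖ * Fq γ q t₁ ^ (2*n+1))
          ≤ (EB γ l ^ (n+1) / ((2*n+1).factorial : ℝ)) * (‖q t₁‖ * Fq γ q 0 ^ (2*n+1)) :=
            mul_le_mul_of_nonneg_left
              (mul_le_mul_of_nonneg_left h1 (norm_nonneg _)) h2
        _ = (EB γ l ^ (n+1) / ((2*n+1).factorial : ℝ) * Fq γ q 0 ^ (2*n+1)) * ‖q t₁‖ := by ring
    have h_int : Integrable (fun t₁ => q t₁ * IN γ q l n t₁) :=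
      Integrable.mono' (hq.norm.const_mul _) h_meas
        (Filter.Eventually.of_forall h_bound_glob)
    constructor
    · -- continuity
      have h2 := (intervalIntegral.continuous_primitive
        (fun a b => h_int.intervalIntegrable) γ).neg
      refine h2.congr fun x => ?_
      rw [Pi.neg_apply, chi_succ, ← intervalIntegral.integral_symm]
    · -- bound
      intro x
      have hrhs_nn : (0:ℝ) ≤ EB γ l ^ (n+1) * Fq γ q x ^ (2*(n+1)) /
          ((2*(n+1)).factorial : ℝ) := by
        have h3 := pow_pos hE0 (n+1)
        have h4 := pow_nonneg (hFnn x) (2*(n+1))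
        positivity
      rcases le_or_gt x γ with hxγ | hγx
      · rw [chi_succ, intervalIntegral.integral_of_le hxγ]
        have hcoef : (0:ℝ) ≤ EB γ l ^ (n+1) / ((2*n+1).factorial : ℝ) := by
          have := pow_pos hE0 (n+1); positivity
        calc ‖∫ t₁ in Set.Ioc x γ, q t₁ * IN γ q l n t₁‖
            ≤ ∫ t₁ in Set.Ioc x γ, ‖q t₁ * IN γ q l n t₁‖ := norm_integral_le_integral_norm _
          _ ≤ ∫ t₁ in Set.Ioc x γ, (EB γ l ^ (n+1) / ((2*n+1).factorial : ℝ)) *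
                (‖q t₁‖ * Fq γ q t₁ ^ (2*n+1)) :=
              setIntegral_mono_on h_int.norm.integrableOn
                (((G_int hq hsupp (2*n+1)).const_mul _).integrableOn) measurableSet_Ioc
                (fun t₁ _ => h_bound_loc t₁)
          _ = (EB γ l ^ (n+1) / ((2*n+1).factorial : ℝ)) *
                ∫ t₁ in Set.Ioc x γ, ‖q t₁‖ * Fq γ q t₁ ^ (2*n+1) := by
              rw [integral_const_mul]
          _ ≤ (EB γ l ^ (n+1) / ((2*n+1).factorial : ℝ)) *
                (Fq γ q x ^ (2*n+1+1) / ((2*n+1 : ℕ) + 1 : ℝ)) :=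
              mul_le_mul_of_nonneg_left (key hq hsupp (2*n+1) x) hcoef
          _ = EB γ l ^ (n+1) * Fq γ q x ^ (2*(n+1)) / ((2*(n+1)).factorial : ℝ) := by
              rw [show 2*(n+1) = (2*n+1)+1 by ring]
              rw [show ((2*n+1)+1).factorial = ((2*n+1)+1) * (2*n+1).factorial from
                Nat.factorial_succ _, div_mul_div_comm]
              push_cast
              ring
      · rw [chi_succ, intervalIntegral.integral_symm,
          intervalIntegral.integral_of_le hγx.le,
          setIntegral_eq_zero_of_forall_eq_zero (fun t₁ ht₁ => ?_), neg_zero, norm_zero]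
        · exact hrhs_nn
        · rw [hq_zero hsupp (fun hmem => absurd hmem.2 (not_le.mpr ht₁.1)), zero_mul]


lemma psi_int' (hγ : 0 < γ) (hq : Integrable q)
    (hsupp : Function.support q ⊆ Set.Icc 0 γ) (l : ℂ) (n : ℕ) :
    Integrable (PSI γ q l n) := by
  obtain ⟨ihc, ihb⟩ := chi_cont_bound hγ hq hsupp l n
  have hE0 : (0:ℝ) < EB γ l := EB_pos γ l
  have hFnn : ∀ t, 0 ≤ Fq γ q t := Fq_nonneg hsupp
  have hF0 : ∀ t, Fq γ q t ≤ Fq γ q 0 := Fq_le hq hsupp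
  have psi_meas : AEStronglyMeasurable (PSI γ q l n) volume :=
    (((Complex.continuous_exp.comp
      (continuous_const.mul Complex.continuous_ofReal)).aestronglyMeasurable.mul
      (Complex.continuous_conj.comp_aestronglyMeasurable hq.1)).mul
      ihc.aestronglyMeasurable)
  have chi_le : ∀ t, ‖chi γ q n t l‖ ≤
      EB γ l ^ n * Fq γ q 0 ^ (2 * n) / ((2 * n).factorial : ℝ) := by
    intro t
    refine (ihb t).trans ?_
    have h1 : Fq γ q t ^ (2 * n) ≤ Fq γ q 0 ^ (2 * n) :=
      pow_le_pow_left₀ (hFnn t) (hF0 t) _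
    have h3 : (0:ℝ) ≤ EB γ l ^ n := le_of_lt (pow_pos hE0 n)
    gcongr
  have psi_bound : ∀ t, ‖PSI γ q l n t‖ ≤
      (EB γ l * (EB γ l ^ n * Fq γ q 0 ^ (2 * n) / ((2 * n).factorial : ℝ))) * ‖q t‖ := by
    intro t
    by_cases hqt : q t = 0
    · simp [PSI, hqt]
    · have htm : t ∈ Set.Icc 0 γ := hsupp (Function.mem_support.mpr hqt)
      have hexp : ‖Complex.exp (2 * Complex.I * l * (t : ℂ))‖ ≤ EB γ l :=
        expBound l (by rw [_root_.abs_of_nonneg htm.1]; exact htm.2)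
      rw [PSI, norm_mul, norm_mul, RCLike.norm_conj]
      calc ‖Complex.exp (2 * Complex.I * l * (t:ℂ))‖ * ‖q t‖ * ‖chi γ q n t l‖
          ≤ EB γ l * ‖q t‖ * (EB γ l ^ n * Fq γ q 0 ^ (2 * n) / ((2 * n).factorial : ℝ)) :=
            mul_le_mul (mul_le_mul hexp le_rfl (norm_nonneg _) hE0.le) (chi_le t)
              (norm_nonneg _) (mul_nonneg hE0.le (norm_nonneg _))
        _ = (EB γ l * (EB γ l ^ n * Fq γ q 0 ^ (2 * n) / ((2 * n).factorial : ℝ))) * ‖q t‖ := by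
            ring
  exact Integrable.mono' (hq.norm.const_mul _) psi_meas
    (Filter.Eventually.of_forall psi_bound)

lemma IN_int_form' (hq : Integrable q) (l : ℂ) (n : ℕ) (t₁ : ℝ) : IN γ q l n t₁ =
    Complex.exp (-(2 * Complex.I * l * (t₁ : ℂ))) * ∫ t₂ in t₁..γ, PSI γ q l n t₂ := by
  rw [IN, intervalIntegral.integral_congr
    (g := fun t₂ => Complex.exp (-(2 * Complex.I * l * (t₁ : ℂ))) * PSI γ q l n t₂)
    (fun t₂ _ => integrand_eq γ q l n t₁ t₂)]
  exact intervalIntegral.integral_const_mul _ _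

lemma IN_cont' (hγ : 0 < γ) (hq : Integrable q)
    (hsupp : Function.support q ⊆ Set.Icc 0 γ) (l : ℂ) (n : ℕ) :
    Continuous (IN γ q l n) := by
  have psi_int := psi_int' hγ hq hsupp l n
  have h1 : Continuous fun t₁ : ℝ => ∫ t₂ in t₁..γ, PSI γ q l n t₂ := by
    have h2 := (intervalIntegral.continuous_primitive
      (fun a b => psi_int.intervalIntegrable) γ).neg
    refine h2.congr fun t₁ => ?_
    rw [Pi.neg_apply, ← intervalIntegral.integral_symm]
  have heq : IN γ q l n = fun t₁ : ℝ =>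
      Complex.exp (-(2 * Complex.I * l * (t₁ : ℂ))) * ∫ t₂ in t₁..γ, PSI γ q l n t₂ :=
    funext (IN_int_form' hq l n)
  rw [heq]
  exact (Complex.continuous_exp.comp
    (continuous_const.mul Complex.continuous_ofReal).neg).mul h1

lemma IN_bound' (hγ : 0 < γ) (hq : Integrable q)
    (hsupp : Function.support q ⊆ Set.Icc 0 γ) (l : ℂ) (n : ℕ) :
    ∀ t₁ ∈ Set.Icc (0:ℝ) γ, ‖IN γ q l n t₁‖ ≤
      EB γ l ^ (n+1) * Fq γ q t₁ ^ (2*n+1) / ((2*n+1).factorial : ℝ) := by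
  obtain ⟨ihc, ihb⟩ := chi_cont_bound hγ hq hsupp l n
  have hE0 : (0:ℝ) < EB γ l := EB_pos γ l
  have psi_int := psi_int' hγ hq hsupp l n
  intro t₁ ht₁
  have hIN_int : Integrable (fun t₂ =>
      Complex.exp (2 * Complex.I * l * ((t₂ : ℝ) - t₁)) * (starRingEnd ℂ) (q t₂) *
        chi γ q n t₂ l) :=
    (psi_int.const_mul (Complex.exp (-(2 * Complex.I * l * (t₁ : ℂ))))).congr
      (Filter.Eventually.of_forall fun t₂ => (integrand_eq γ q l n t₁ t₂).symm)
  have hcoef : (0:ℝ) ≤ EB γ l ^ (n+1) / ((2*n).factorial : ℝ) := by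
    have := pow_pos hE0 (n+1); positivity
  rw [IN, intervalIntegral.integral_of_le ht₁.2]
  calc ‖∫ t₂ in Set.Ioc t₁ γ, Complex.exp (2 * Complex.I * l * ((t₂ : ℝ) - t₁)) *
          (starRingEnd ℂ) (q t₂) * chi γ q n t₂ l‖
      ≤ ∫ t₂ in Set.Ioc t₁ γ, ‖Complex.exp (2 * Complex.I * l * ((t₂ : ℝ) - t₁)) *
          (starRingEnd ℂ) (q t₂) * chi γ q n t₂ l‖ := norm_integral_le_integral_norm _
    _ ≤ ∫ t₂ in Set.Ioc t₁ γ, (EB γ l ^ (n+1) / ((2*n).factorial : ℝ)) *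
          (‖q t₂‖ * Fq γ q t₂ ^ (2*n)) := by
        refine setIntegral_mono_on hIN_int.norm.integrableOn
          (((G_int hq hsupp (2*n)).const_mul _).integrableOn) measurableSet_Ioc
          fun t₂ ht₂ => ?_
        rw [norm_mul, norm_mul, RCLike.norm_conj]
        have hexp : ‖Complex.exp (2 * Complex.I * l * ((t₂ : ℂ) - (t₁ : ℂ)))‖ ≤ EB γ l := by
          refine expBound' l ?_
          rw [_root_.abs_of_nonneg (by linarith [ht₂.1] : (0:ℝ) ≤ t₂ - t₁)]
          have := ht₁.1; have := ht₂.2; linarith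
        calc ‖Complex.exp (2 * Complex.I * l * ((t₂ : ℂ) - (t₁ : ℂ)))‖ * ‖q t₂‖ *
              ‖chi γ q n t₂ l‖
            ≤ EB γ l * ‖q t₂‖ * (EB γ l ^ n * Fq γ q t₂ ^ (2 * n) /
                ((2 * n).factorial : ℝ)) :=
              mul_le_mul (mul_le_mul hexp le_rfl (norm_nonneg _) hE0.le) (ihb t₂)
                (norm_nonneg _) (mul_nonneg hE0.le (norm_nonneg _))
          _ = (EB γ l ^ (n+1) / ((2*n).factorial : ℝ)) * (‖q t₂‖ * Fq γ q t₂ ^ (2*n)) := by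
              ring
    _ = (EB γ l ^ (n+1) / ((2*n).factorial : ℝ)) *
          ∫ t₂ in Set.Ioc t₁ γ, ‖q t₂‖ * Fq γ q t₂ ^ (2*n) := by
        rw [integral_const_mul]
    _ ≤ (EB γ l ^ (n+1) / ((2*n).factorial : ℝ)) *
          (Fq γ q t₁ ^ (2*n+1) / ((2*n : ℕ) + 1 : ℝ)) := by
        refine mul_le_mul_of_nonneg_left ?_ hcoef
        exact key hq hsupp (2*n) t₁
    _ = EB γ l ^ (n+1) * Fq γ q t₁ ^ (2*n+1) / ((2*n+1).factorial : ℝ) := by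
        rw [show (2*n+1).factorial = (2*n+1) * (2*n).factorial from Nat.factorial_succ _,
          div_mul_div_comm]
        push_cast
        ring

lemma chi_summable (hγ : 0 < γ) (hq : Integrable q)
    (hsupp : Function.support q ⊆ Set.Icc 0 γ) (l : ℂ) (x : ℝ) :
    Summable fun n : ℕ => chi γ q (n + 1) x l := by
  have hE0 : (0:ℝ) < EB γ l := EB_pos γ l
  have hC0 : (0:ℝ) ≤ Fq γ q 0 := Fq_nonneg hsupp 0
  set C := Fq γ q 0 with hC
  set D := EB γ l * (C + 1) ^ 2 with hD
  refine Summable.of_norm_bounded (g := fun n => D ^ (n+1) / ((n+1).factorial : ℝ))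
    ((summable_nat_add_iff 1).mpr (Real.summable_pow_div_factorial D)) ?_
  intro n
  have hb := (chi_cont_bound hγ hq hsupp l (n+1)).2 x
  refine hb.trans ?_
  have h1 : Fq γ q x ^ (2*(n+1)) ≤ (C + 1) ^ (2*(n+1)) :=
    pow_le_pow_left₀ (Fq_nonneg hsupp x) (by linarith [Fq_le hq hsupp x]) _
  have h2 : ((n+1).factorial : ℝ) ≤ ((2*(n+1)).factorial : ℝ) := by
    exact_mod_cast Nat.factorial_le (by omega)
  have hD' : D ^ (n+1) = EB γ l ^ (n+1) * (C + 1) ^ (2*(n+1)) := by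
    rw [hD, mul_pow, pow_mul]
  calc EB γ l ^ (n+1) * Fq γ q x ^ (2*(n+1)) / ((2*(n+1)).factorial : ℝ)
      ≤ EB γ l ^ (n+1) * (C + 1) ^ (2*(n+1)) / ((n+1).factorial : ℝ) := by
        refine div_le_div₀ (by positivity) ?_ (by positivity) h2
        exact mul_le_mul_of_nonneg_left h1 (le_of_lt (pow_pos hE0 _))
    _ = D ^ (n+1) / ((n+1).factorial : ℝ) := by rw [hD']

lemma swap_tsum (hq : Integrable q) {a b : ℝ} (g : ℕ → ℝ → ℂ)
    (gmeas : ∀ n, AEStronglyMeasurable (g n) volume)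
    (c : ℕ → ℝ) (hc : Summable c) (hcnn : ∀ n, 0 ≤ c n)
    (hb : ∀ n t, ‖g n t‖ ≤ c n * ‖q t‖) :
    ∫ t in a..b, ∑' n, g n t = ∑' n, ∫ t in a..b, g n t := by
  have hQtop : (∫⁻ t, (‖q t‖₊ : ENNReal) ∂volume) < ⊤ := hq.2
  have main : ∀ u v : ℝ,
      ∫ t in Set.Ioc u v, ∑' n, g n t = ∑' n, ∫ t in Set.Ioc u v, g n t := by
    intro u v
    refine integral_tsum (fun n => (gmeas n).restrict) ?_
    have hterm : ∀ n, (∫⁻ t, (‖g n t‖₊ : ENNReal) ∂(volume.restrict (Set.Ioc u v))) ≤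
        ((c n).toNNReal : ENNReal) * ∫⁻ t, (‖q t‖₊ : ENNReal) ∂volume := by
      intro n
      have hpt : ∀ t, (‖g n t‖₊ : ENNReal) ≤
          ((c n).toNNReal : ENNReal) * (‖q t‖₊ : ENNReal) := by
        intro t
        rw [← ENNReal.coe_mul]
        refine ENNReal.coe_le_coe.2 ?_
        rw [← NNReal.coe_le_coe]
        push_cast
        rw [Real.coe_toNNReal _ (hcnn n)]
        exact hb n t
      calc (∫⁻ t, (‖g n t‖₊ : ENNReal) ∂(volume.restrict (Set.Ioc u v)))
          ≤ ∫⁻ t, ((c n).toNNReal : ENNReal) * (‖q t‖₊ : ENNReal)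
              ∂(volume.restrict (Set.Ioc u v)) := lintegral_mono hpt
        _ = ((c n).toNNReal : ENNReal) *
              ∫⁻ t, (‖q t‖₊ : ENNReal) ∂(volume.restrict (Set.Ioc u v)) :=
            lintegral_const_mul' _ _ ENNReal.coe_ne_top
        _ ≤ ((c n).toNNReal : ENNReal) * ∫⁻ t, (‖q t‖₊ : ENNReal) ∂volume := by
            exact mul_le_mul_right (lintegral_mono' Measure.restrict_le_self le_rfl) _
    refine ne_of_lt (lt_of_le_of_lt (ENNReal.tsum_le_tsum hterm) ?_)
    rw [ENNReal.tsum_mul_right]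
    exact ENNReal.mul_lt_top
      (lt_of_le_of_ne le_top (ENNReal.tsum_coe_ne_top_iff_summable.2 hc.toNNReal)) hQtop
  rcases le_total a b with hab | hba
  · rw [intervalIntegral.integral_of_le hab, main a b]
    exact tsum_congr fun n => (intervalIntegral.integral_of_le hab).symm
  · rw [intervalIntegral.integral_symm, intervalIntegral.integral_of_le hba, main b a,
      ← tsum_neg]
    refine tsum_congr fun n => ?_
    rw [intervalIntegral.integral_symm, intervalIntegral.integral_of_le hba]

end ChiAux


/-- The series `χ(x,λ) = 1 + Σ_{n≥1} χ_n(x,λ)` converges for all `x ∈ ℝ`, and the sum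
satisfies the integral equation
`χ(x,λ) = 1 + ∫_x^γ q(t₁) ∫_{t₁}^γ exp(2iλ(t₂−t₁))·conj(q(t₂))·χ(t₂,λ) dt₂ dt₁`. -/
theorem chi_series_integral_equation (γ : ℝ) (hγ : 0 < γ) (q : ℝ → ℂ)
    (hq : Integrable q) (hsupp : Function.support q ⊆ Set.Icc 0 γ) (l : ℂ) :
    (∀ x : ℝ, Summable fun n : ℕ => chi γ q (n + 1) x l) ∧
    (∀ x : ℝ,
      (1 + ∑' n : ℕ, chi γ q (n + 1) x l) =
        1 + ∫ t₁ in x..γ, q t₁ *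
          ∫ t₂ in t₁..γ,
            Complex.exp (2 * Complex.I * l * ((t₂ : ℝ) - t₁)) * (starRingEnd ℂ) (q t₂) *
              (1 + ∑' n : ℕ, chi γ q (n + 1) t₂ l)) := by
  have hsum : ∀ x : ℝ, Summable fun n : ℕ => chi γ q (n + 1) x l := fun x =>
    ChiAux.chi_summable hγ hq hsupp l x
  refine ⟨hsum, fun x => ?_⟩
  have hE0 : (0:ℝ) < ChiAux.EB γ l := ChiAux.EB_pos γ l
  have hFnn : ∀ t, 0 ≤ ChiAux.Fq γ q t := ChiAux.Fq_nonneg hsupp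
  have hF0 : ∀ t, ChiAux.Fq γ q t ≤ ChiAux.Fq γ q 0 := ChiAux.Fq_le hq hsupp
  set E := ChiAux.EB γ l with hE
  set C := ChiAux.Fq γ q 0 with hCdef
  have hC0 : (0:ℝ) ≤ C := hFnn 0
  have hsumfull : ∀ t, Summable fun n : ℕ => chi γ q n t l := fun t =>
    (summable_nat_add_iff 1).mp (hsum t)
  have hT : ∀ t : ℝ, (1 : ℂ) + ∑' n : ℕ, chi γ q (n+1) t l =
      ∑' n : ℕ, chi γ q n t l := by
    intro t
    rw [Summable.tsum_eq_zero_add (hsumfull t)]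
    simp only [show chi γ q 0 t l = (1:ℂ) from rfl]
  have hchi_le : ∀ (n : ℕ) (t : ℝ), ‖chi γ q n t l‖ ≤
      (E * (C+1)^2)^n / (n.factorial : ℝ) := by
    intro n t
    refine ((ChiAux.chi_cont_bound hγ hq hsupp l n).2 t).trans ?_
    have h1 : ChiAux.Fq γ q t ^ (2*n) ≤ (C+1)^(2*n) :=
      pow_le_pow_left₀ (hFnn t) (by linarith [hF0 t]) _
    have h2 : ((n).factorial : ℝ) ≤ ((2*n).factorial : ℝ) := by
      exact_mod_cast Nat.factorial_le (by omega)
    calc E^n * ChiAux.Fq γ q t ^(2*n) / ((2*n).factorial : ℝ)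
        ≤ E^n * (C+1)^(2*n) / (n.factorial : ℝ) :=
          div_le_div₀ (by positivity)
            (mul_le_mul_of_nonneg_left h1 (le_of_lt (pow_pos hE0 _)))
            (by positivity) h2
      _ = (E * (C+1)^2)^n / (n.factorial : ℝ) := by rw [mul_pow, pow_mul]
  set c1 : ℕ → ℝ := fun n => E * ((E * (C+1)^2)^n / (n.factorial : ℝ)) with hc1def
  have hc1 : Summable c1 := (Real.summable_pow_div_factorial _).mul_left _
  have hc1nn : ∀ n, 0 ≤ c1 n := fun n =>
    mul_nonneg hE0.le (div_nonneg (pow_nonneg (by positivity) _) (by positivity))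
  have hpoint : ∀ t₁ : ℝ, (q t₁ * ∫ t₂ in t₁..γ,
      Complex.exp (2 * Complex.I * l * ((t₂ : ℝ) - t₁)) * (starRingEnd ℂ) (q t₂) *
        (1 + ∑' n : ℕ, chi γ q (n + 1) t₂ l)) =
      ∑' n : ℕ, q t₁ * ChiAux.IN γ q l n t₁ := by
    intro t₁
    by_cases hqt : q t₁ = 0
    · simp [hqt]
    · have htm : t₁ ∈ Set.Icc 0 γ := hsupp (Function.mem_support.mpr hqt)
      have hinner : (∫ t₂ in t₁..γ,
          Complex.exp (2 * Complex.I * l * ((t₂ : ℝ) - t₁)) * (starRingEnd ℂ) (q t₂) *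
            (1 + ∑' n : ℕ, chi γ q (n + 1) t₂ l)) = ∑' n : ℕ, ChiAux.IN γ q l n t₁ := by
        calc (∫ t₂ in t₁..γ,
            Complex.exp (2 * Complex.I * l * ((t₂ : ℝ) - t₁)) * (starRingEnd ℂ) (q t₂) *
              (1 + ∑' n : ℕ, chi γ q (n + 1) t₂ l))
            = ∫ t₂ in t₁..γ, ∑' n : ℕ,
                Complex.exp (2 * Complex.I * l * ((t₂ : ℝ) - t₁)) * (starRingEnd ℂ) (q t₂) *
                  chi γ q n t₂ l :=
              intervalIntegral.integral_congr fun t₂ _ => by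
                rw [hT t₂, ← tsum_mul_left]
          _ = ∑' n : ℕ, ∫ t₂ in t₁..γ,
                Complex.exp (2 * Complex.I * l * ((t₂ : ℝ) - t₁)) * (starRingEnd ℂ) (q t₂) *
                  chi γ q n t₂ l := by
              refine ChiAux.swap_tsum hq _ (fun n => ?_) c1 hc1 hc1nn (fun n t₂ => ?_)
              · exact ((Complex.continuous_exp.comp (continuous_const.mul
                  (Complex.continuous_ofReal.sub continuous_const))).aestronglyMeasurable.mul
                  (Complex.continuous_conj.comp_aestronglyMeasurable hq.1)).mul
                  ((ChiAux.chi_cont_bound hγ hq hsupp l n).1.aestronglyMeasurable)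
              · by_cases hq2 : q t₂ = 0
                · simp [hq2]
                · have htm2 : t₂ ∈ Set.Icc 0 γ := hsupp (Function.mem_support.mpr hq2)
                  rw [norm_mul, norm_mul, RCLike.norm_conj]
                  have hexp : ‖Complex.exp (2 * Complex.I * l * ((t₂:ℂ) - (t₁:ℂ)))‖ ≤ E :=
                    ChiAux.expBound' l (abs_le.mpr
                      ⟨by linarith [htm.2, htm2.1], by linarith [htm.1, htm2.2]⟩)
                  calc ‖Complex.exp (2 * Complex.I * l * ((t₂:ℂ) - (t₁:ℂ)))‖ * ‖q t₂‖ *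
                        ‖chi γ q n t₂ l‖
                      ≤ E * ‖q t₂‖ * ((E * (C+1)^2)^n / (n.factorial : ℝ)) :=
                        mul_le_mul (mul_le_mul hexp le_rfl (norm_nonneg _) hE0.le)
                          (hchi_le n t₂) (norm_nonneg _)
                          (mul_nonneg hE0.le (norm_nonneg _))
                    _ = c1 n * ‖q t₂‖ := by rw [hc1def]; ring
          _ = ∑' n : ℕ, ChiAux.IN γ q l n t₁ := tsum_congr fun n => rfl
      rw [hinner]
      exact tsum_mul_left.symm
  congr 1
  set c2 : ℕ → ℝ := fun n => (C+1) * c1 n with hc2def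
  have hc2 : Summable c2 := hc1.mul_left _
  have hc2nn : ∀ n, 0 ≤ c2 n := fun n => mul_nonneg (by linarith) (hc1nn n)
  calc (∑' n : ℕ, chi γ q (n+1) x l)
      = ∑' n : ℕ, ∫ t₁ in x..γ, q t₁ * ChiAux.IN γ q l n t₁ :=
        tsum_congr fun n => ChiAux.chi_succ γ q l n x
    _ = ∫ t₁ in x..γ, ∑' n : ℕ, q t₁ * ChiAux.IN γ q l n t₁ := by
        refine (ChiAux.swap_tsum hq _ (fun n => ?_) c2 hc2 hc2nn (fun n t₁ => ?_)).symm
        · exact hq.1.mul (ChiAux.IN_cont' hγ hq hsupp l n).aestronglyMeasurable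
        · by_cases hqt : q t₁ = 0
          · simp [hqt]
          · have htm : t₁ ∈ Set.Icc 0 γ := hsupp (Function.mem_support.mpr hqt)
            rw [norm_mul]
            have hIN : ‖ChiAux.IN γ q l n t₁‖ ≤ (C+1) * c1 n := by
              refine (ChiAux.IN_bound' hγ hq hsupp l n t₁ htm).trans ?_
              have h1 : ChiAux.Fq γ q t₁ ^ (2*n+1) ≤ (C+1)^(2*n+1) :=
                pow_le_pow_left₀ (hFnn t₁) (by linarith [hF0 t₁]) _
              have h2 : ((n).factorial : ℝ) ≤ ((2*n+1).factorial : ℝ) := by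
                exact_mod_cast Nat.factorial_le (by omega)
              calc E^(n+1) * ChiAux.Fq γ q t₁ ^ (2*n+1) / ((2*n+1).factorial : ℝ)
                  ≤ E^(n+1) * (C+1)^(2*n+1) / (n.factorial : ℝ) :=
                    div_le_div₀ (by positivity)
                      (mul_le_mul_of_nonneg_left h1 (le_of_lt (pow_pos hE0 _)))
                      (by positivity) h2
                _ = (C+1) * c1 n := by
                    show E^(n+1) * (C+1)^(2*n+1) / (n.factorial : ℝ) =
                      (C+1) * (E * ((E * (C+1)^2)^n / (n.factorial : ℝ)))
                    rw [mul_pow, ← pow_mul]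
                    field_simp
                    ring
            calc ‖q t₁‖ * ‖ChiAux.IN γ q l n t₁‖
                ≤ ‖q t₁‖ * ((C+1) * c1 n) :=
                  mul_le_mul_of_nonneg_left hIN (norm_nonneg _)
              _ = c2 n * ‖q t₁‖ := by rw [hc2def]; ring
    _ = ∫ t₁ in x..γ, q t₁ *
          ∫ t₂ in t₁..γ,
            Complex.exp (2 * Complex.I * l * ((t₂ : ℝ) - t₁)) * (starRingEnd ℂ) (q t₂) *
              (1 + ∑' n : ℕ, chi γ q (n + 1) t₂ l) :=
        intervalIntegral.integral_congr fun t₁ _ => (hpoint t₁).symm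
end
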